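/- arXiv:2308.16365 — 4 statements merged into one kernel-verified Lean document; each statement's English description precedes it below -/
import Mathlib

section
/- Let n ≥ 5 and let c be a (5,8)-coloring of K_n. Then every connected component of every color class of c that contains at least one edge has at most 3 edges, and is therefore isomorphic to one of K_2 (a single edge), P_3 (a path with 2 edges), P_4 (a path with 3 edges), K_{1,3} (a star with 3 edges), or K_3 (a triangle). -/
open SimpleGraph

/-- The color class of color `i` in the edge-coloring `c` of the complete graph on `Fin n`:
the spanning subgraph consisting of the edges of color `i`. -/
def colorClass {n : ℕ} {α : Type*} (c : Sym2 (Fin n) → α) (i : α) :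
    SimpleGraph (Fin n) where
  Adj x y := x ≠ y ∧ c s(x, y) = i
  symm := by
    constructor
    rintro x y ⟨hxy, hc⟩
    refine ⟨hxy.symm, ?_⟩
    rwa [Sym2.eq_swap]
  loopless := by
    constructor
    rintro x ⟨hxx, -⟩
    exact hxx rfl

/-- `c` is a `(p,q)`-coloring of the complete graph on `Fin n`: every set of `p` vertices
spans edges receiving at least `q` distinct colors. -/
def IsPQColoring {n : ℕ} {α : Type*} (p q : ℕ) (c : Sym2 (Fin n) → α) : Prop :=
  ∀ S : Finset (Fin n), S.card = p →
    q ≤ {j : α | ∃ x ∈ S, ∃ y ∈ S, x ≠ y ∧ c s(x, y) = j}.ncard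

/-- `f(n,p,q)`: the minimum number of colors in a `(p,q)`-coloring of `K_n`. -/
noncomputable def fpq (n p q : ℕ) : ℕ :=
  sInf {m : ℕ | ∃ c : Sym2 (Fin n) → Fin m, IsPQColoring p q c}

/-- The coloring `c` has a monochromatic triangle. -/
def HasMonoTriangle {n : ℕ} {α : Type*} (c : Sym2 (Fin n) → α) : Prop :=
  ∃ x y z : Fin n, x ≠ y ∧ y ≠ z ∧ x ≠ z ∧
    c s(x, y) = c s(y, z) ∧ c s(y, z) = c s(x, z)

/-- The connected component `K` of `G` (as an induced subgraph) is isomorphic to `H`. -/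
def ComponentIso {V : Type*} (G : SimpleGraph V) (K : G.ConnectedComponent)
    {W : Type*} (H : SimpleGraph W) : Prop :=
  Nonempty (G.induce K.supp ≃g H)

/-- The connected component `K` of `G` contains at least one edge. -/
def CompHasEdge {V : Type*} (G : SimpleGraph V) (K : G.ConnectedComponent) : Prop :=
  ∃ u v : V, u ∈ K.supp ∧ G.Adj u v

/-- The set of monochromatic components (pairs of a color and a connected component of its
color class) isomorphic to `H`. -/
def compsIso {n : ℕ} {α : Type*} (c : Sym2 (Fin n) → α) {W : Type*} (H : SimpleGraph W) :
    Set (Σ i : α, (colorClass c i).ConnectedComponent) :=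
  {X | ComponentIso (colorClass c X.1) X.2 H}

/-- The star `K_{1,3}`. -/
def starK13 : SimpleGraph (Fin 1 ⊕ Fin 3) := completeBipartiteGraph (Fin 1) (Fin 3)

/-- `A`: maximal monochromatic components isomorphic to `K_2`. -/
def setA {n : ℕ} {α : Type*} (c : Sym2 (Fin n) → α) :
    Set (Σ i : α, (colorClass c i).ConnectedComponent) := compsIso c (pathGraph 2)

/-- `B`: maximal monochromatic components isomorphic to `P_3` (path with 2 edges). -/
def setB {n : ℕ} {α : Type*} (c : Sym2 (Fin n) → α) :
    Set (Σ i : α, (colorClass c i).ConnectedComponent) := compsIso c (pathGraph 3)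

/-- `C`: maximal monochromatic components isomorphic to `P_4` (path with 3 edges). -/
def setC {n : ℕ} {α : Type*} (c : Sym2 (Fin n) → α) :
    Set (Σ i : α, (colorClass c i).ConnectedComponent) := compsIso c (pathGraph 4)

/-- `D`: maximal monochromatic components isomorphic to `K_{1,3}`. -/
def setD {n : ℕ} {α : Type*} (c : Sym2 (Fin n) → α) :
    Set (Σ i : α, (colorClass c i).ConnectedComponent) := compsIso c starK13

/-- `B_1`: components in `B` sharing at most one vertex with every other component of `B`. -/
def setB1 {n : ℕ} {α : Type*} (c : Sym2 (Fin n) → α) :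
    Set (Σ i : α, (colorClass c i).ConnectedComponent) :=
  {X ∈ setB c | ∀ Y ∈ setB c, Y ≠ X → (X.2.supp ∩ Y.2.supp).ncard ≤ 1}

/-- `B_2 = B \ B_1`. -/
def setB2 {n : ℕ} {α : Type*} (c : Sym2 (Fin n) → α) :
    Set (Σ i : α, (colorClass c i).ConnectedComponent) := setB c \ setB1 c

/-- A monochromatic 2-edge path (for a total coloring). -/
def MonoPath2 {n : ℕ} {α : Type*} (c : Sym2 (Fin n) → α) (x y z : Fin n) : Prop :=
  x ≠ y ∧ y ≠ z ∧ x ≠ z ∧ c s(x, y) = c s(y, z)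

/-- The three values `a`, `b`, `c` take exactly two distinct values. -/
def ExactlyTwo {α : Type*} (a b c : α) : Prop :=
  (a = b ∧ a ≠ c) ∨ (b = c ∧ a ≠ b) ∨ (a = c ∧ a ≠ b)

/-- A 2-edge path `x-y-z` with both edges of color `i`, with respect to the
edge-color relation `col`. -/
def PathCol {n : ℕ} {α : Type*} (col : Sym2 (Fin n) → α → Prop) (i : α)
    (x y z : Fin n) : Prop :=
  x ≠ y ∧ y ≠ z ∧ x ≠ z ∧ col s(x, y) i ∧ col s(y, z) i

/-- A 2-edge matching `{xy, uv}` with both edges of color `i`, with respect to the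
edge-color relation `col`. -/
def MatchCol {n : ℕ} {α : Type*} (col : Sym2 (Fin n) → α → Prop) (i : α)
    (x y u v : Fin n) : Prop :=
  x ≠ y ∧ u ≠ v ∧ x ≠ u ∧ x ≠ v ∧ y ≠ u ∧ y ≠ v ∧ col s(x, y) i ∧ col s(u, v) i

/-- The colored edge set `E` contains a triangle whose three edges receive exactly
two distinct colors. -/
def TwoColTriIn {n : ℕ} {α : Type*} (E : Set (Sym2 (Fin n) × α)) : Prop :=
  ∃ (x y z : Fin n) (c₁ c₂ c₃ : α), x ≠ y ∧ y ≠ z ∧ x ≠ z ∧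
    (s(x, y), c₁) ∈ E ∧ (s(y, z), c₂) ∈ E ∧ (s(x, z), c₃) ∈ E ∧
    ExactlyTwo c₁ c₂ c₃

/-- Bad subgraph of type (a): an alternating 4-cycle formed by two monochromatic
2-edge matchings of distinct colors, with all vertices in `S`. -/
def TypeA {n : ℕ} {α : Type*} (col : Sym2 (Fin n) → α → Prop) (S : Finset (Fin n)) : Prop :=
  ∃ (w x y z : Fin n) (i ℓ : α), w ∈ S ∧ x ∈ S ∧ y ∈ S ∧ z ∈ S ∧ i ≠ ℓ ∧
    MatchCol col i w x y z ∧ MatchCol col ℓ x y z w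

/-- Bad subgraph of type (b): an alternating 5-cycle colored with two colors `i ≠ ℓ`,
where `i` appears on a 2-edge path plus a vertex-disjoint edge and `ℓ` on the remaining
two nonadjacent edges, with all vertices in `S`. -/
def TypeB {n : ℕ} {α : Type*} (col : Sym2 (Fin n) → α → Prop) (S : Finset (Fin n)) : Prop :=
  ∃ (v₀ v₁ v₂ v₃ v₄ : Fin n) (i ℓ : α),
    v₀ ∈ S ∧ v₁ ∈ S ∧ v₂ ∈ S ∧ v₃ ∈ S ∧ v₄ ∈ S ∧ i ≠ ℓ ∧
    List.Pairwise (· ≠ ·) [v₀, v₁, v₂, v₃, v₄] ∧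
    col s(v₀, v₁) i ∧ col s(v₁, v₂) i ∧ col s(v₃, v₄) i ∧
    col s(v₂, v₃) ℓ ∧ col s(v₄, v₀) ℓ

/-- Bad subgraph of type (c): a 6-edge subgraph on 5 vertices with three distinct colors,
where color `i` forms a 2-edge path and colors `ℓ`, `m` each form 2-edge matchings,
containing a triangle whose edges use exactly two colors. -/
def TypeC {n : ℕ} {α : Type*} (col : Sym2 (Fin n) → α → Prop) (S : Finset (Fin n)) : Prop :=
  ∃ (a b d x y u v p q r w : Fin n) (i ℓ m : α),
    a ∈ S ∧ b ∈ S ∧ d ∈ S ∧ x ∈ S ∧ y ∈ S ∧ u ∈ S ∧ v ∈ S ∧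
    p ∈ S ∧ q ∈ S ∧ r ∈ S ∧ w ∈ S ∧
    i ≠ ℓ ∧ i ≠ m ∧ ℓ ≠ m ∧
    PathCol col i a b d ∧ MatchCol col ℓ x y u v ∧ MatchCol col m p q r w ∧
    TwoColTriIn ({(s(a, b), i), (s(b, d), i), (s(x, y), ℓ), (s(u, v), ℓ),
      (s(p, q), m), (s(r, w), m)} : Set (Sym2 (Fin n) × α))

/-- Bad subgraph of type (d): a 6-edge subgraph on 5 vertices with three distinct colors,
where one color forms a 2-edge matching and each of the other two forms a 2-edge path. -/
def TypeD {n : ℕ} {α : Type*} (col : Sym2 (Fin n) → α → Prop) (S : Finset (Fin n)) : Prop :=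
  ∃ (a b d a' b' d' x y u v : Fin n) (i ℓ m : α),
    a ∈ S ∧ b ∈ S ∧ d ∈ S ∧ a' ∈ S ∧ b' ∈ S ∧ d' ∈ S ∧
    x ∈ S ∧ y ∈ S ∧ u ∈ S ∧ v ∈ S ∧
    i ≠ ℓ ∧ i ≠ m ∧ ℓ ≠ m ∧
    PathCol col i a b d ∧ PathCol col ℓ a' b' d' ∧ MatchCol col m x y u v

/-- Bad subgraph of type (e): a 6-edge subgraph on 5 vertices with three distinct colors,
where two colors form 2-edge matchings and the third forms a 2-edge path, containing
no triangle colored with exactly two colors. -/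
def TypeE {n : ℕ} {α : Type*} (col : Sym2 (Fin n) → α → Prop) (S : Finset (Fin n)) : Prop :=
  ∃ (a b d x y u v p q r w : Fin n) (i ℓ m : α),
    a ∈ S ∧ b ∈ S ∧ d ∈ S ∧ x ∈ S ∧ y ∈ S ∧ u ∈ S ∧ v ∈ S ∧
    p ∈ S ∧ q ∈ S ∧ r ∈ S ∧ w ∈ S ∧
    i ≠ ℓ ∧ i ≠ m ∧ ℓ ≠ m ∧
    PathCol col i a b d ∧ MatchCol col ℓ x y u v ∧ MatchCol col m p q r w ∧
    ¬ TwoColTriIn ({(s(a, b), i), (s(b, d), i), (s(x, y), ℓ), (s(u, v), ℓ),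
      (s(p, q), m), (s(r, w), m)} : Set (Sym2 (Fin n) × α))

/-- Bad subgraph of type (f): a 6-edge subgraph on 5 vertices formed by three
monochromatic 2-edge matchings of three distinct colors. -/
def TypeF {n : ℕ} {α : Type*} (col : Sym2 (Fin n) → α → Prop) (S : Finset (Fin n)) : Prop :=
  ∃ (x₁ y₁ u₁ v₁ x₂ y₂ u₂ v₂ x₃ y₃ u₃ v₃ : Fin n) (i ℓ m : α),
    x₁ ∈ S ∧ y₁ ∈ S ∧ u₁ ∈ S ∧ v₁ ∈ S ∧ x₂ ∈ S ∧ y₂ ∈ S ∧ u₂ ∈ S ∧ v₂ ∈ S ∧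
    x₃ ∈ S ∧ y₃ ∈ S ∧ u₃ ∈ S ∧ v₃ ∈ S ∧
    i ≠ ℓ ∧ i ≠ m ∧ ℓ ≠ m ∧
    MatchCol col i x₁ y₁ u₁ v₁ ∧ MatchCol col ℓ x₂ y₂ u₂ v₂ ∧ MatchCol col m x₃ y₃ u₃ v₃

/-- Bad subgraph of type `t`, where `t = 0,1,2,3,4,5` codes types (a)-(f). -/
def BadOfType {n : ℕ} {α : Type*} (t : ℕ) (col : Sym2 (Fin n) → α → Prop)
    (S : Finset (Fin n)) : Prop :=
  if t = 0 then TypeA col S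
  else if t = 1 then TypeB col S
  else if t = 2 then TypeC col S
  else if t = 3 then TypeD col S
  else if t = 4 then TypeE col S
  else TypeF col S

section Helpers
open Finset

lemma colorA {n : ℕ} {α : Type*} {c : Sym2 (Fin n) → α} (hc : IsPQColoring 5 8 c) (i : α)
    (S : Finset (Fin n)) (hS : S.card = 5)
    (E : Finset (Sym2 (Fin n))) (hE : E.card = 4)
    (hgood : ∀ e ∈ E, ∃ x y, x ≠ y ∧ x ∈ S ∧ y ∈ S ∧ e = s(x, y) ∧ c e = i) : False := by
  classical
  set P := S.offDiag.image (Function.uncurry Sym2.mk) with hPdef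
  have hP : P.card = 10 := by
    rw [hPdef, Sym2.card_image_offDiag, hS]; rfl
  have hEP : E ⊆ P := by
    intro e he
    obtain ⟨x, y, hxy, hx, hy, rfl, -⟩ := hgood e he
    exact Finset.mem_image.2 ⟨(x, y), Finset.mem_offDiag.2 ⟨hx, hy, hxy⟩, rfl⟩
  have hset : {j : α | ∃ x ∈ S, ∃ y ∈ S, x ≠ y ∧ c s(x, y) = j} = ↑(P.image c) := by
    ext j
    simp only [Set.mem_setOf_eq, Finset.coe_image, Set.mem_image, Finset.mem_coe]
    constructor
    · rintro ⟨x, hx, y, hy, hxy, hcj⟩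
      exact ⟨s(x, y), Finset.mem_image.2 ⟨(x, y), Finset.mem_offDiag.2 ⟨hx, hy, hxy⟩, rfl⟩, hcj⟩
    · rintro ⟨e, he, rfl⟩
      obtain ⟨⟨x, y⟩, hxy, rfl⟩ := Finset.mem_image.1 he
      rw [Finset.mem_offDiag] at hxy
      exact ⟨x, hxy.1, y, hxy.2.1, hxy.2.2, rfl⟩
  have h8 := hc S hS
  rw [hset, Set.ncard_coe_finset] at h8
  have himg : P.image c ⊆ insert i ((P \ E).image c) := by
    intro j hj
    obtain ⟨e, he, rfl⟩ := Finset.mem_image.1 hj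
    by_cases heE : e ∈ E
    · obtain ⟨x, y, hxy, hx, hy, he', hci⟩ := hgood e heE
      rw [hci]; exact Finset.mem_insert_self _ _
    · exact Finset.mem_insert_of_mem (Finset.mem_image_of_mem _ (Finset.mem_sdiff.2 ⟨he, heE⟩))
  have h1 : (P \ E).card = 6 := by rw [Finset.card_sdiff_of_subset hEP, hP, hE]
  have h2 : ((P \ E).image c).card ≤ 6 := h1 ▸ Finset.card_image_le
  have := (Finset.card_le_card himg).trans (Finset.card_insert_le _ _)
  omega

lemma noFour {n : ℕ} {α : Type*} (hn : 5 ≤ n) {c : Sym2 (Fin n) → α}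
    (hc : IsPQColoring 5 8 c) (i : α)
    (S0 : Finset (Fin n)) (h5 : S0.card ≤ 5)
    (E : Finset (Sym2 (Fin n))) (hE : E.card = 4)
    (hgood : ∀ e ∈ E, ∃ x y, x ≠ y ∧ x ∈ S0 ∧ y ∈ S0 ∧ e = s(x, y) ∧ c e = i) : False := by
  obtain ⟨S, hsub, hScard⟩ := Finset.exists_superset_card_eq h5 (by simpa using hn)
  refine colorA hc i S hScard E hE fun e he => ?_
  obtain ⟨x, y, hxy, hx, hy, he', hci⟩ := hgood e he
  exact ⟨x, y, hxy, hsub hx, hsub hy, he', hci⟩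

lemma cross {V : Type*} {G : SimpleGraph V} {T : Set V} {u x : V} (w : G.Walk u x)
    (hx : x ∉ T) : u ∈ T → ∃ a b, a ∈ T ∧ b ∉ T ∧ G.Adj a b := by
  induction w with
  | nil => exact fun hu => absurd hu hx
  | @cons u v x h p ih =>
    intro hu
    by_cases hv : v ∈ T
    · exact ih hx hv
    · exact ⟨u, v, hu, hv, h⟩

lemma mem_supp_of_adj {V : Type*} {G : SimpleGraph V} {K : G.ConnectedComponent} {u v : V}
    (hu : u ∈ K.supp) (h : G.Adj u v) : v ∈ K.supp := by
  rw [SimpleGraph.ConnectedComponent.mem_supp_iff] at hu ⊢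
  rw [← hu]
  exact SimpleGraph.ConnectedComponent.eq.2 h.symm.reachable

lemma grow {n : ℕ} {α : Type*} {c : Sym2 (Fin n) → α} {i : α}
    (K : (colorClass c i).ConnectedComponent) :
    ∀ k : ℕ, 1 ≤ k → k ≤ K.supp.ncard → ∃ (S : Finset (Fin n)) (E : Finset (Sym2 (Fin n))),
      S.card = k ∧ ↑S ⊆ K.supp ∧ E.card = k - 1 ∧
      ∀ e ∈ E, ∃ x y, x ≠ y ∧ x ∈ S ∧ y ∈ S ∧ e = s(x, y) ∧ c e = i := by
  intro k
  induction k with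
  | zero => omega
  | succ k ih =>
    intro _ hk
    by_cases hk1 : k = 0
    · subst hk1
      obtain ⟨v, hv⟩ := K.exists_rep
      refine ⟨{v}, ∅, by simp, by intro z hz; simp at hz; subst hz; rw [SimpleGraph.ConnectedComponent.mem_supp_iff, ← hv]; rfl, by simp, by simp⟩
    · obtain ⟨S, E, hSc, hSsupp, hEc, hEg⟩ := ih (by omega) (by omega)
      have hns : ¬ K.supp ⊆ ↑S := by
        intro hss
        have := Set.ncard_le_ncard hss S.finite_toSet
        rw [Set.ncard_coe_finset] at this
        omega
      obtain ⟨x, hxsupp, hxS⟩ := Set.not_subset.1 hns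
      obtain ⟨u, huS⟩ := Finset.card_pos.1 (by omega : 0 < S.card)
      have husupp : u ∈ K.supp := hSsupp huS
      have hreach : (colorClass c i).Reachable u x := by
        rw [SimpleGraph.ConnectedComponent.mem_supp_iff] at hxsupp husupp
        exact SimpleGraph.ConnectedComponent.eq.1 (husupp.trans hxsupp.symm)
      obtain ⟨w⟩ := hreach
      obtain ⟨a, b, haT, hbT, hab⟩ := cross (T := ↑S) w hxS huS
      have hbsupp : b ∈ K.supp := mem_supp_of_adj (hSsupp haT) hab
      have hbS : b ∉ S := hbT
      have hnotE : s(a, b) ∉ E := by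
        intro hmem
        obtain ⟨x', y', hxy', hx', hy', he', -⟩ := hEg _ hmem
        have : b = x' ∨ b = y' := by
          have : b ∈ s(x', y') := he' ▸ Sym2.mem_mk_right a b
          simpa using this
        rcases this with rfl | rfl
        · exact hbS hx'
        · exact hbS hy'
      refine ⟨insert b S, insert s(a, b) E, ?_, ?_, ?_, ?_⟩
      · rw [Finset.card_insert_of_notMem hbS, hSc]
      · rw [Finset.coe_insert, Set.insert_subset_iff]
        exact ⟨hbsupp, hSsupp⟩
      · rw [Finset.card_insert_of_notMem hnotE, hEc]
        omega
      · intro e he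
        rcases Finset.mem_insert.1 he with rfl | he'
        · exact ⟨a, b, hab.1, Finset.mem_insert_of_mem haT, Finset.mem_insert_self _ _, rfl, hab.2⟩
        · obtain ⟨x', y', h1, h2, h3, h4, h5⟩ := hEg _ he'
          exact ⟨x', y', h1, Finset.mem_insert_of_mem h2, Finset.mem_insert_of_mem h3, h4, h5⟩

lemma supp_ncard_le {n : ℕ} {α : Type*} (hn : 5 ≤ n) {c : Sym2 (Fin n) → α}
    (hc : IsPQColoring 5 8 c) (i : α) (K : (colorClass c i).ConnectedComponent) :
    K.supp.ncard ≤ 4 := by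
  by_contra h
  obtain ⟨S, E, hSc, -, hEc, hEg⟩ := grow K 5 (by omega) (by omega)
  exact colorA hc i S hSc E (by omega) hEg

lemma edge_bound {n : ℕ} {α : Type*} (hn : 5 ≤ n) {c : Sym2 (Fin n) → α}
    (hc : IsPQColoring 5 8 c) (i : α) (K : (colorClass c i).ConnectedComponent) :
    ((colorClass c i).induce K.supp).edgeSet.ncard ≤ 3 := by
  classical
  have hsupp : K.supp.ncard ≤ 4 := supp_ncard_le hn hc i K
  by_contra h
  push_neg at h
  obtain ⟨t, hts, htc⟩ := Set.exists_subset_card_eq (show 4 ≤ _ from h)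
  have htfin : t.Finite := Set.toFinite t
  have hFc : htfin.toFinset.card = 4 := by
    rw [← Set.ncard_eq_toFinset_card t htfin]; exact htc
  set S0 : Finset (Fin n) := (K.supp.toFinite).toFinset with hS0
  have hS0c : S0.card ≤ 4 := by
    rw [hS0, ← Set.ncard_eq_toFinset_card _ K.supp.toFinite]; exact hsupp
  refine noFour hn hc i S0 (by omega : S0.card ≤ 5)
    (htfin.toFinset.image (Sym2.map (Subtype.val : K.supp → Fin n)))
    (by rw [Finset.card_image_of_injective _ (Sym2.map.injective Subtype.val_injective), hFc])
    ?_
  intro e he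
  obtain ⟨e', he', rfl⟩ := Finset.mem_image.1 he
  have he'E : e' ∈ ((colorClass c i).induce K.supp).edgeSet := hts (htfin.mem_toFinset.1 he')
  induction e' using Sym2.ind with
  | _ a b =>
    rw [SimpleGraph.mem_edgeSet] at he'E
    have hadj : (colorClass c i).Adj ↑a ↑b := he'E
    refine ⟨↑a, ↑b, hadj.1, ?_, ?_, rfl, hadj.2⟩
    · rw [hS0, Set.Finite.mem_toFinset]; exact a.2
    · rw [hS0, Set.Finite.mem_toFinset]; exact b.2

section Iso
variable {V : Type*} {G : SimpleGraph V}

lemma iso_pair {a b : V} (hab : G.Adj a b) :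
    Nonempty (G.induce {a, b} ≃g pathGraph 2) := by
  classical
  have hne : a ≠ b := hab.ne
  refine ⟨{ toFun := fun x => if (x : V) = a then 0 else 1,
            invFun := fun p => if p = 0 then ⟨a, by simp⟩ else ⟨b, by simp⟩,
            left_inv := ?_, right_inv := ?_, map_rel_iff' := ?_ }⟩
  · rintro ⟨x, hx⟩
    have hx' : x = a ∨ x = b := by simpa using hx
    rcases hx' with h | h <;> subst h <;> simp [hne.symm]
  · intro p
    fin_cases p <;> simp [hne.symm]
  · rintro ⟨x, hx⟩ ⟨y, hy⟩
    have hx' : x = a ∨ x = b := by simpa using hx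
    have hy' : y = a ∨ y = b := by simpa using hy
    rcases hx' with h1 | h1 <;> rcases hy' with h2 | h2 <;> subst h1 <;> subst h2 <;>
      simp [pathGraph_adj, hne, hne.symm, hab, hab.symm]
end Iso

section Iso2
variable {V : Type*} {G : SimpleGraph V}

lemma iso_path3 {a b c : V} (hab : G.Adj a b) (hbc : G.Adj b c) (hac : a ≠ c)
    (hnac : ¬ G.Adj a c) :
    Nonempty (G.induce {a, b, c} ≃g pathGraph 3) := by
  classical
  have h1 : a ≠ b := hab.ne
  have h2 : b ≠ c := hbc.ne
  have hnca : ¬ G.Adj c a := fun h => hnac h.symm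
  refine ⟨{ toFun := fun x => if (x : V) = a then 0 else if (x : V) = b then 1 else 2,
            invFun := fun p => if p = 0 then ⟨a, by simp⟩ else if p = 1 then ⟨b, by simp⟩
              else ⟨c, by simp⟩,
            left_inv := ?_, right_inv := ?_, map_rel_iff' := ?_ }⟩
  · rintro ⟨x, hx⟩
    have hx' : x = a ∨ x = b ∨ x = c := by simpa using hx
    rcases hx' with h | h | h <;> subst h <;> simp [h1, h1.symm, h2, h2.symm, hac, hac.symm]
  · intro p
    fin_cases p <;> simp [h1, h1.symm, h2, h2.symm, hac, hac.symm]
  · rintro ⟨x, hx⟩ ⟨y, hy⟩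
    have hx' : x = a ∨ x = b ∨ x = c := by simpa using hx
    have hy' : y = a ∨ y = b ∨ y = c := by simpa using hy
    rcases hx' with h1' | h1' | h1' <;> rcases hy' with h2' | h2' | h2' <;>
      subst h1' <;> subst h2' <;>
      simp [pathGraph_adj, h1, h1.symm, h2, h2.symm, hac, hac.symm,
        hab, hab.symm, hbc, hbc.symm, hnac, hnca]

lemma iso_tri {a b c : V} (hab : G.Adj a b) (hbc : G.Adj b c) (hac : G.Adj a c) :
    Nonempty (G.induce {a, b, c} ≃g (⊤ : SimpleGraph (Fin 3))) := by
  classical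
  have h1 : a ≠ b := hab.ne
  have h2 : b ≠ c := hbc.ne
  have h3 : a ≠ c := hac.ne
  refine ⟨{ toFun := fun x => if (x : V) = a then 0 else if (x : V) = b then 1 else 2,
            invFun := fun p => if p = 0 then ⟨a, by simp⟩ else if p = 1 then ⟨b, by simp⟩
              else ⟨c, by simp⟩,
            left_inv := ?_, right_inv := ?_, map_rel_iff' := ?_ }⟩
  · rintro ⟨x, hx⟩
    have hx' : x = a ∨ x = b ∨ x = c := by simpa using hx
    rcases hx' with h | h | h <;> subst h <;> simp [h1, h1.symm, h2, h2.symm, h3, h3.symm]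
  · intro p
    fin_cases p <;> simp [h1, h1.symm, h2, h2.symm, h3, h3.symm]
  · rintro ⟨x, hx⟩ ⟨y, hy⟩
    have hx' : x = a ∨ x = b ∨ x = c := by simpa using hx
    have hy' : y = a ∨ y = b ∨ y = c := by simpa using hy
    rcases hx' with h1' | h1' | h1' <;> rcases hy' with h2' | h2' | h2' <;>
      subst h1' <;> subst h2' <;>
      simp [h1, h1.symm, h2, h2.symm, h3, h3.symm, hab, hab.symm, hbc, hbc.symm, hac, hac.symm]

end Iso2

section Iso4
variable {V : Type*} {G : SimpleGraph V}

lemma iso_path4 {a b c d : V} (hab : G.Adj a b) (hbc : G.Adj b c) (hcd : G.Adj c d)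
    (hac : a ≠ c) (had : a ≠ d) (hbd : b ≠ d)
    (hnac : ¬ G.Adj a c) (hnad : ¬ G.Adj a d) (hnbd : ¬ G.Adj b d) :
    Nonempty (G.induce {a, b, c, d} ≃g pathGraph 4) := by
  classical
  have h1 : a ≠ b := hab.ne
  have h2 : b ≠ c := hbc.ne
  have h3 : c ≠ d := hcd.ne
  have hnca : ¬ G.Adj c a := fun h => hnac h.symm
  have hnda : ¬ G.Adj d a := fun h => hnad h.symm
  have hndb : ¬ G.Adj d b := fun h => hnbd h.symm
  refine ⟨{ toFun := fun x => if (x : V) = a then 0 else if (x : V) = b then 1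
              else if (x : V) = c then 2 else 3,
            invFun := fun p => if p = 0 then ⟨a, by simp⟩ else if p = 1 then ⟨b, by simp⟩
              else if p = 2 then ⟨c, by simp⟩ else ⟨d, by simp⟩,
            left_inv := ?_, right_inv := ?_, map_rel_iff' := ?_ }⟩
  · rintro ⟨x, hx⟩
    have hx' : x = a ∨ x = b ∨ x = c ∨ x = d := by simpa using hx
    rcases hx' with h | h | h | h <;> subst h <;>
      simp [h1, h1.symm, h2, h2.symm, h3, h3.symm, hac, hac.symm, had, had.symm, hbd, hbd.symm]
  · intro p
    fin_cases p <;>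
      simp [h1, h1.symm, h2, h2.symm, h3, h3.symm, hac, hac.symm, had, had.symm, hbd, hbd.symm]
  · rintro ⟨x, hx⟩ ⟨y, hy⟩
    have hx' : x = a ∨ x = b ∨ x = c ∨ x = d := by simpa using hx
    have hy' : y = a ∨ y = b ∨ y = c ∨ y = d := by simpa using hy
    rcases hx' with h1' | h1' | h1' | h1' <;> rcases hy' with h2' | h2' | h2' | h2' <;>
      subst h1' <;> subst h2' <;>
      simp [pathGraph_adj, h1, h1.symm, h2, h2.symm, h3, h3.symm, hac, hac.symm, had, had.symm,
        hbd, hbd.symm, hab, hab.symm, hbc, hbc.symm, hcd, hcd.symm, hnac, hnad, hnbd,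
        hnca, hnda, hndb] <;> decide

lemma iso_star {a b c d : V} (hab : G.Adj a b) (hac : G.Adj a c) (had : G.Adj a d)
    (hbc : b ≠ c) (hbd : b ≠ d) (hcd : c ≠ d)
    (hnbc : ¬ G.Adj b c) (hnbd : ¬ G.Adj b d) (hncd : ¬ G.Adj c d) :
    Nonempty (G.induce {a, b, c, d} ≃g starK13) := by
  classical
  have h1 : a ≠ b := hab.ne
  have h2 : a ≠ c := hac.ne
  have h3 : a ≠ d := had.ne
  have hncb : ¬ G.Adj c b := fun h => hnbc h.symm
  have hndb : ¬ G.Adj d b := fun h => hnbd h.symm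
  have hndc : ¬ G.Adj d c := fun h => hncd h.symm
  refine ⟨{ toFun := fun x => if (x : V) = a then Sum.inl 0 else if (x : V) = b then Sum.inr 0
              else if (x : V) = c then Sum.inr 1 else Sum.inr 2,
            invFun := fun p => match p with
              | Sum.inl _ => ⟨a, by simp⟩
              | Sum.inr 0 => ⟨b, by simp⟩
              | Sum.inr 1 => ⟨c, by simp⟩
              | Sum.inr 2 => ⟨d, by simp⟩,
            left_inv := ?_, right_inv := ?_, map_rel_iff' := ?_ }⟩
  · rintro ⟨x, hx⟩
    have hx' : x = a ∨ x = b ∨ x = c ∨ x = d := by simpa using hx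
    rcases hx' with h | h | h | h <;> subst h <;>
      simp [h1, h1.symm, h2, h2.symm, h3, h3.symm, hbc, hbc.symm, hbd, hbd.symm, hcd, hcd.symm]
  · intro p
    rcases p with p | p
    · fin_cases p <;>
        simp [h1, h1.symm, h2, h2.symm, h3, h3.symm, hbc, hbc.symm, hbd, hbd.symm, hcd, hcd.symm]
    · fin_cases p <;>
        simp [h1, h1.symm, h2, h2.symm, h3, h3.symm, hbc, hbc.symm, hbd, hbd.symm, hcd, hcd.symm]
  · rintro ⟨x, hx⟩ ⟨y, hy⟩
    have hx' : x = a ∨ x = b ∨ x = c ∨ x = d := by simpa using hx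
    have hy' : y = a ∨ y = b ∨ y = c ∨ y = d := by simpa using hy
    rcases hx' with h1' | h1' | h1' | h1' <;> rcases hy' with h2' | h2' | h2' | h2' <;>
      subst h1' <;> subst h2' <;>
      simp [starK13, h1, h1.symm, h2, h2.symm, h3, h3.symm, hbc, hbc.symm, hbd, hbd.symm,
        hcd, hcd.symm, hab, hab.symm, hac, hac.symm, had, had.symm, hnbc, hnbd, hncd,
        hncb, hndb, hndc]

end Iso4

lemma classify4 {V : Type*} {G : SimpleGraph V} {s : Set V} {u v w x p q : V}
    (hsupp : s = {u, v, w, x})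
    (huv : u ≠ v) (huw : u ≠ w) (hvw : v ≠ w) (hux : u ≠ x) (hvx : v ≠ x) (hwx : w ≠ x)
    (h1 : G.Adj u v) (hp : p = u ∨ p = v) (h2 : G.Adj p w)
    (hq : q = u ∨ q = v ∨ q = w) (h3 : G.Adj q x)
    (hno : ∀ r t : V, G.Adj r t → r ∈ s → t ∈ s →
      s(r, t) = s(u, v) ∨ s(r, t) = s(p, w) ∨ s(r, t) = s(q, x)) :
    Nonempty (G.induce s ≃g pathGraph 4) ∨ Nonempty (G.induce s ≃g starK13) := by
  have hum : u ∈ s := by rw [hsupp]; simp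
  have hvm : v ∈ s := by rw [hsupp]; simp
  have hwm : w ∈ s := by rw [hsupp]; simp
  have hxm : x ∈ s := by rw [hsupp]; simp
  rcases hp with hpe | hpe <;> rcases hq with hqe | hqe | hqe <;>
    rw [hpe] at h2 hno <;> rw [hqe] at h3 hno
  · -- p = u, q = u : star center u
    have hnvw : ¬ G.Adj v w := fun h => by
      rcases hno v w h hvm hwm with h' | h' | h' <;>
        simp [Sym2.eq_iff, huv, huw, hvw, hux, hvx, hwx, huv.symm, huw.symm, hvw.symm,
          hux.symm, hvx.symm, hwx.symm] at h'
    have hnvx : ¬ G.Adj v x := fun h => by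
      rcases hno v x h hvm hxm with h' | h' | h' <;>
        simp [Sym2.eq_iff, huv, huw, hvw, hux, hvx, hwx, huv.symm, huw.symm, hvw.symm,
          hux.symm, hvx.symm, hwx.symm] at h'
    have hnwx : ¬ G.Adj w x := fun h => by
      rcases hno w x h hwm hxm with h' | h' | h' <;>
        simp [Sym2.eq_iff, huv, huw, hvw, hux, hvx, hwx, huv.symm, huw.symm, hvw.symm,
          hux.symm, hvx.symm, hwx.symm] at h'
    right
    rw [hsupp]
    exact iso_star h1 h2 h3 hvw hvx hwx hnvw hnvx hnwx
  · -- p = u, q = v : path w-u-v-x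
    have hnwv : ¬ G.Adj w v := fun h => by
      rcases hno w v h hwm hvm with h' | h' | h' <;>
        simp [Sym2.eq_iff, huv, huw, hvw, hux, hvx, hwx, huv.symm, huw.symm, hvw.symm,
          hux.symm, hvx.symm, hwx.symm] at h'
    have hnwx : ¬ G.Adj w x := fun h => by
      rcases hno w x h hwm hxm with h' | h' | h' <;>
        simp [Sym2.eq_iff, huv, huw, hvw, hux, hvx, hwx, huv.symm, huw.symm, hvw.symm,
          hux.symm, hvx.symm, hwx.symm] at h'
    have hnux : ¬ G.Adj u x := fun h => by
      rcases hno u x h hum hxm with h' | h' | h' <;>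
        simp [Sym2.eq_iff, huv, huw, hvw, hux, hvx, hwx, huv.symm, huw.symm, hvw.symm,
          hux.symm, hvx.symm, hwx.symm] at h'
    left
    rw [hsupp, show ({u, v, w, x} : Set V) = {w, u, v, x} by ext z; simp; tauto]
    exact iso_path4 h2.symm h1 h3 hvw.symm hwx hux hnwv hnwx hnux
  · -- p = u, q = w : path v-u-w-x
    have hnvw : ¬ G.Adj v w := fun h => by
      rcases hno v w h hvm hwm with h' | h' | h' <;>
        simp [Sym2.eq_iff, huv, huw, hvw, hux, hvx, hwx, huv.symm, huw.symm, hvw.symm,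
          hux.symm, hvx.symm, hwx.symm] at h'
    have hnvx : ¬ G.Adj v x := fun h => by
      rcases hno v x h hvm hxm with h' | h' | h' <;>
        simp [Sym2.eq_iff, huv, huw, hvw, hux, hvx, hwx, huv.symm, huw.symm, hvw.symm,
          hux.symm, hvx.symm, hwx.symm] at h'
    have hnux : ¬ G.Adj u x := fun h => by
      rcases hno u x h hum hxm with h' | h' | h' <;>
        simp [Sym2.eq_iff, huv, huw, hvw, hux, hvx, hwx, huv.symm, huw.symm, hvw.symm,
          hux.symm, hvx.symm, hwx.symm] at h'
    left
    rw [hsupp, show ({u, v, w, x} : Set V) = {v, u, w, x} by ext z; simp; tauto]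
    exact iso_path4 h1.symm h2 h3 hvw hvx hux hnvw hnvx hnux
  · -- p = v, q = u : path w-v-u-x
    have hnwu : ¬ G.Adj w u := fun h => by
      rcases hno w u h hwm hum with h' | h' | h' <;>
        simp [Sym2.eq_iff, huv, huw, hvw, hux, hvx, hwx, huv.symm, huw.symm, hvw.symm,
          hux.symm, hvx.symm, hwx.symm] at h'
    have hnwx : ¬ G.Adj w x := fun h => by
      rcases hno w x h hwm hxm with h' | h' | h' <;>
        simp [Sym2.eq_iff, huv, huw, hvw, hux, hvx, hwx, huv.symm, huw.symm, hvw.symm,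
          hux.symm, hvx.symm, hwx.symm] at h'
    have hnvx : ¬ G.Adj v x := fun h => by
      rcases hno v x h hvm hxm with h' | h' | h' <;>
        simp [Sym2.eq_iff, huv, huw, hvw, hux, hvx, hwx, huv.symm, huw.symm, hvw.symm,
          hux.symm, hvx.symm, hwx.symm] at h'
    left
    rw [hsupp, show ({u, v, w, x} : Set V) = {w, v, u, x} by ext z; simp; tauto]
    exact iso_path4 h2.symm h1.symm h3 huw.symm hwx hvx hnwu hnwx hnvx
  · -- p = v, q = v : star center v
    have hnuw : ¬ G.Adj u w := fun h => by
      rcases hno u w h hum hwm with h' | h' | h' <;>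
        simp [Sym2.eq_iff, huv, huw, hvw, hux, hvx, hwx, huv.symm, huw.symm, hvw.symm,
          hux.symm, hvx.symm, hwx.symm] at h'
    have hnux : ¬ G.Adj u x := fun h => by
      rcases hno u x h hum hxm with h' | h' | h' <;>
        simp [Sym2.eq_iff, huv, huw, hvw, hux, hvx, hwx, huv.symm, huw.symm, hvw.symm,
          hux.symm, hvx.symm, hwx.symm] at h'
    have hnwx : ¬ G.Adj w x := fun h => by
      rcases hno w x h hwm hxm with h' | h' | h' <;>
        simp [Sym2.eq_iff, huv, huw, hvw, hux, hvx, hwx, huv.symm, huw.symm, hvw.symm,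
          hux.symm, hvx.symm, hwx.symm] at h'
    right
    rw [hsupp, show ({u, v, w, x} : Set V) = {v, u, w, x} by ext z; simp; tauto]
    exact iso_star h1.symm h2 h3 huw hux hwx hnuw hnux hnwx
  · -- p = v, q = w : path u-v-w-x
    have hnuw : ¬ G.Adj u w := fun h => by
      rcases hno u w h hum hwm with h' | h' | h' <;>
        simp [Sym2.eq_iff, huv, huw, hvw, hux, hvx, hwx, huv.symm, huw.symm, hvw.symm,
          hux.symm, hvx.symm, hwx.symm] at h'
    have hnux : ¬ G.Adj u x := fun h => by
      rcases hno u x h hum hxm with h' | h' | h' <;>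
        simp [Sym2.eq_iff, huv, huw, hvw, hux, hvx, hwx, huv.symm, huw.symm, hvw.symm,
          hux.symm, hvx.symm, hwx.symm] at h'
    have hnvx : ¬ G.Adj v x := fun h => by
      rcases hno v x h hvm hxm with h' | h' | h' <;>
        simp [Sym2.eq_iff, huv, huw, hvw, hux, hvx, hwx, huv.symm, huw.symm, hvw.symm,
          hux.symm, hvx.symm, hwx.symm] at h'
    left
    rw [hsupp]
    exact iso_path4 h1 h2 h3 huw hux hvx hnuw hnux hnvx

set_option maxHeartbeats 1000000 in
theorem components_of_color_classes' {n : ℕ} {α : Type*} (hn : 5 ≤ n)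
    (c : Sym2 (Fin n) → α) (hc : IsPQColoring 5 8 c) :
    ∀ (i : α) (K : (colorClass c i).ConnectedComponent),
      (∃ u v : Fin n, u ∈ K.supp ∧ (colorClass c i).Adj u v) →
      ((colorClass c i).induce K.supp).edgeSet.ncard ≤ 3 ∧
      (Nonempty ((colorClass c i).induce K.supp ≃g pathGraph 2) ∨
       Nonempty ((colorClass c i).induce K.supp ≃g pathGraph 3) ∨
       Nonempty ((colorClass c i).induce K.supp ≃g pathGraph 4) ∨
       Nonempty ((colorClass c i).induce K.supp ≃g starK13) ∨
       Nonempty ((colorClass c i).induce K.supp ≃g (⊤ : SimpleGraph (Fin 3)))) := by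
  classical
  intro i K hKe
  obtain ⟨u, v, huK, huv⟩ := hKe
  have hvK : v ∈ K.supp := mem_supp_of_adj huK huv
  have hne : u ≠ v := huv.ne
  have hfin : K.supp.Finite := Set.toFinite _
  have h4 : K.supp.ncard ≤ 4 := supp_ncard_le hn hc i K
  refine ⟨edge_bound hn hc i K, ?_⟩
  have key : ∀ E : Finset (Sym2 (Fin n)), E.card = 4 →
      (∀ e ∈ E, ∃ x y, x ≠ y ∧ x ∈ K.supp ∧ y ∈ K.supp ∧ e = s(x, y) ∧ c e = i) → False := by
    intro E hE hgood
    refine noFour hn hc i hfin.toFinset ?_ E hE ?_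
    · rw [← Set.ncard_eq_toFinset_card _ hfin]; omega
    · intro e he
      obtain ⟨x, y, h1, h2, h3, h4', h5⟩ := hgood e he
      exact ⟨x, y, h1, hfin.mem_toFinset.2 h2, hfin.mem_toFinset.2 h3, h4', h5⟩
  have crossK : ∀ (T : Set (Fin n)) (a0 b0 : Fin n), a0 ∈ T → a0 ∈ K.supp → b0 ∈ K.supp →
      b0 ∉ T → ∃ a b, a ∈ T ∧ b ∉ T ∧ (colorClass c i).Adj a b := by
    intro T a0 b0 haT haK hbK hbT
    have hreach : (colorClass c i).Reachable a0 b0 := by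
      rw [SimpleGraph.ConnectedComponent.mem_supp_iff] at haK hbK
      exact SimpleGraph.ConnectedComponent.eq.1 (haK.trans hbK.symm)
    obtain ⟨wlk⟩ := hreach
    exact cross wlk hbT haT
  have hpairsub : ({u, v} : Set (Fin n)) ⊆ K.supp := by
    rw [Set.insert_subset_iff, Set.singleton_subset_iff]; exact ⟨huK, hvK⟩
  have h2le : 2 ≤ K.supp.ncard := by
    calc 2 = ({u, v} : Set (Fin n)).ncard := (Set.ncard_pair hne).symm
      _ ≤ _ := Set.ncard_le_ncard hpairsub hfin
  have hm : K.supp.ncard = 2 ∨ K.supp.ncard = 3 ∨ K.supp.ncard = 4 := by omega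
  rcases hm with hm | hm | hm
  · -- two vertices
    have hsupp : K.supp = {u, v} := by
      refine (Set.eq_of_subset_of_ncard_le hpairsub ?_ hfin).symm
      rw [hm, Set.ncard_pair hne]
    refine Or.inl ?_
    rw [hsupp]
    exact iso_pair huv
  · -- three vertices
    have hnsub : ¬ K.supp ⊆ {u, v} := by
      intro hss
      have := Set.ncard_le_ncard hss (Set.toFinite _)
      rw [Set.ncard_pair hne] at this
      omega
    obtain ⟨w, hwK, hwuv⟩ := Set.not_subset.1 hnsub
    have hwu : w ≠ u := fun h => hwuv (by simp [h])
    have hwv : w ≠ v := fun h => hwuv (by simp [h])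
    have htripsub : ({u, v, w} : Set (Fin n)) ⊆ K.supp := by
      rw [Set.insert_subset_iff, Set.insert_subset_iff, Set.singleton_subset_iff]
      exact ⟨huK, hvK, hwK⟩
    have hsupp : K.supp = {u, v, w} := by
      refine (Set.eq_of_subset_of_ncard_le htripsub ?_ hfin).symm
      rw [hm, Set.ncard_insert_of_notMem (by simp [hne, hwu.symm] : u ∉ ({v, w} : Set (Fin n)))
        (Set.toFinite _), Set.ncard_pair hwv.symm]
    obtain ⟨a, b, haT, hbT, hab⟩ := crossK {u, v} u w (by simp) huK hwK hwuv
    have hbK : b ∈ K.supp := mem_supp_of_adj (hpairsub haT) hab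
    have hbw : b = w := by
      rw [hsupp] at hbK
      rcases hbK with h | h | h
      · exact absurd (by simp [h]) hbT
      · exact absurd (by simp [h]) hbT
      · exact h
    rw [hbw] at hab
    rcases (by simpa using haT : a = u ∨ a = v) with hae | hae
    · rw [hae] at hab
      by_cases hvw : (colorClass c i).Adj v w
      · refine Or.inr (Or.inr (Or.inr (Or.inr ?_)))
        rw [hsupp]
        exact iso_tri huv hvw hab
      · refine Or.inr (Or.inl ?_)
        rw [hsupp, show ({u, v, w} : Set (Fin n)) = {v, u, w} by ext z; simp; tauto]
        exact iso_path3 huv.symm hab hwv.symm hvw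
    · rw [hae] at hab
      by_cases huw : (colorClass c i).Adj u w
      · refine Or.inr (Or.inr (Or.inr (Or.inr ?_)))
        rw [hsupp]
        exact iso_tri huv hab huw
      · refine Or.inr (Or.inl ?_)
        rw [hsupp]
        exact iso_path3 huv hab hwu.symm huw
  · -- four vertices
    have hnsub : ¬ K.supp ⊆ {u, v} := by
      intro hss
      have := Set.ncard_le_ncard hss (Set.toFinite _)
      rw [Set.ncard_pair hne] at this
      omega
    obtain ⟨w, hwK, hwuv⟩ := Set.not_subset.1 hnsub
    have hwu : w ≠ u := fun h => hwuv (by simp [h])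
    have hwv : w ≠ v := fun h => hwuv (by simp [h])
    have htripnc : ({u, v, w} : Set (Fin n)).ncard = 3 := by
      rw [Set.ncard_insert_of_notMem (by simp [hne, hwu.symm] : u ∉ ({v, w} : Set (Fin n)))
        (Set.toFinite _), Set.ncard_pair hwv.symm]
    have hnsub3 : ¬ K.supp ⊆ {u, v, w} := by
      intro hss
      have := Set.ncard_le_ncard hss (Set.toFinite _)
      rw [htripnc] at this
      omega
    obtain ⟨x, hxK, hxuvw⟩ := Set.not_subset.1 hnsub3
    have hxu : x ≠ u := fun h => hxuvw (by simp [h])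
    have hxv : x ≠ v := fun h => hxuvw (by simp [h])
    have hxw : x ≠ w := fun h => hxuvw (by simp [h])
    have hquadsub : ({u, v, w, x} : Set (Fin n)) ⊆ K.supp := by
      rw [Set.insert_subset_iff, Set.insert_subset_iff, Set.insert_subset_iff,
        Set.singleton_subset_iff]
      exact ⟨huK, hvK, hwK, hxK⟩
    have hsupp : K.supp = {u, v, w, x} := by
      refine (Set.eq_of_subset_of_ncard_le hquadsub ?_ hfin).symm
      rw [hm]
      rw [Set.ncard_insert_of_notMem (by simp [hne, hwu.symm, hxu.symm] :
            u ∉ ({v, w, x} : Set (Fin n)))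
          (Set.toFinite _),
        Set.ncard_insert_of_notMem (by simp [hwv.symm, hxv.symm] : v ∉ ({w, x} : Set (Fin n)))
          (Set.toFinite _),
        Set.ncard_pair hxw.symm]
    -- first cross edge
    obtain ⟨a1, b1, ha1T, hb1T, hab1⟩ := crossK {u, v} u w (by simp) huK hwK hwuv
    have hb1K : b1 ∈ K.supp := mem_supp_of_adj (hpairsub ha1T) hab1
    have ha1 : a1 = u ∨ a1 = v := by simpa using ha1T
    have hb1u : b1 ≠ u := fun h => hb1T (by simp [h])
    have hb1v : b1 ≠ v := fun h => hb1T (by simp [h])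
    have hb1wx : b1 = w ∨ b1 = x := by
      rw [hsupp] at hb1K
      rcases hb1K with h | h | h | h
      · exact absurd h hb1u
      · exact absurd h hb1v
      · exact Or.inl h
      · exact Or.inr h
    -- the remaining vertex r
    obtain ⟨r, hrK, hrT, hpair⟩ : ∃ r, r ∈ K.supp ∧ r ∉ ({u, v, b1} : Set (Fin n)) ∧
        ((b1 = w ∧ r = x) ∨ (b1 = x ∧ r = w)) := by
      rcases hb1wx with h | h
      · exact ⟨x, hxK, by simp [hxu, hxv]; exact fun hh => hxw (hh.trans h), Or.inl ⟨h, rfl⟩⟩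
      · exact ⟨w, hwK, by simp [hwu, hwv]; exact fun hh => hxw (hh.trans h).symm, Or.inr ⟨h, rfl⟩⟩
    obtain ⟨a2, b2, ha2T, hb2T, hab2⟩ := crossK {u, v, b1} u r (by simp) huK hrK hrT
    have ha2K : a2 ∈ K.supp := by
      rcases (by simpa using ha2T : a2 = u ∨ a2 = v ∨ a2 = b1) with h | h | h <;>
        simp [h, huK, hvK, hb1K]
    have hb2K : b2 ∈ K.supp := mem_supp_of_adj ha2K hab2
    have hb2u : b2 ≠ u := fun h => hb2T (by simp [h])
    have hb2v : b2 ≠ v := fun h => hb2T (by simp [h])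
    have hb2b1 : b2 ≠ b1 := fun h => hb2T (by simp [h])
    have hb2r : b2 = r := by
      rw [hsupp] at hb2K
      rcases hpair with ⟨hb1e, hre⟩ | ⟨hb1e, hre⟩ <;>
        · subst hb1e; subst hre
          rcases hb2K with h | h | h | h
          · exact absurd h hb2u
          · exact absurd h hb2v
          · first
              | exact absurd h hb2b1
              | exact h
          · first
              | exact absurd h hb2b1
              | exact h
    rw [hb2r] at hab2
    -- supp as {u, v, b1, r}
    have hsupp' : K.supp = {u, v, b1, r} := by
      rw [hsupp]
      rcases hpair with ⟨h1, h2⟩ | ⟨h1, h2⟩ <;> subst h1 <;> subst h2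
      · rfl
      · ext z; simp; tauto
    have hvb1 : v ≠ b1 := hb1v.symm
    have hub1 : u ≠ b1 := hb1u.symm
    have hur : u ≠ r := fun h => hrT (by simp [h])
    have hvr : v ≠ r := fun h => hrT (by simp [h])
    have hb1r : b1 ≠ r := fun h => hrT (by simp [h])
    -- only three edges
    have hno : ∀ y t : Fin n, (colorClass c i).Adj y t → y ∈ K.supp → t ∈ K.supp →
        s(y, t) = s(u, v) ∨ s(y, t) = s(a1, b1) ∨ s(y, t) = s(a2, r) := by
      intro y t hyt hyK htK
      by_contra hcon
      push_neg at hcon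
      obtain ⟨hc1, hc2, hc3⟩ := hcon
      have hd1 : s(u, v) ≠ s(a1, b1) := by
        intro h
        rw [Sym2.eq_iff] at h
        rcases h with ⟨h1, h2⟩ | ⟨h1, h2⟩
        · exact hb1v h2.symm
        · exact hb1u h1.symm
      have hd2 : s(u, v) ≠ s(a2, r) := by
        intro h
        rw [Sym2.eq_iff] at h
        rcases h with ⟨h1, h2⟩ | ⟨h1, h2⟩
        · exact hvr h2
        · exact hur h1
      have hd3 : s(a1, b1) ≠ s(a2, r) := by
        intro h
        rw [Sym2.eq_iff] at h
        rcases h with ⟨h1, h2⟩ | ⟨h1, h2⟩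
        · exact hb1r h2
        · rcases ha1 with h' | h'
          · exact hur (h'.symm.trans h1)
          · exact hvr (h'.symm.trans h1)
      refine key {s(y, t), s(u, v), s(a1, b1), s(a2, r)} ?_ ?_
      · rw [Finset.card_insert_of_notMem (by simp [hc1, hc2, hc3]),
          Finset.card_insert_of_notMem (by simp [hd1, hd2]),
          Finset.card_insert_of_notMem (by simp [hd3]),
          Finset.card_singleton]
      · intro e he
        simp only [Finset.mem_insert, Finset.mem_singleton] at he
        rcases he with rfl | rfl | rfl | rfl
        · exact ⟨y, t, hyt.ne, hyK, htK, rfl, hyt.2⟩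
        · exact ⟨u, v, hne, huK, hvK, rfl, huv.2⟩
        · exact ⟨a1, b1, hab1.ne, hpairsub ha1T, hb1K, rfl, hab1.2⟩
        · exact ⟨a2, r, hab2.ne, ha2K, hrK, rfl, hab2.2⟩
    have ha2' : a2 = u ∨ a2 = v ∨ a2 = b1 := by simpa using ha2T
    rcases classify4 hsupp' hne hub1 hvb1 hur hvr hb1r huv ha1 hab1 ha2' hab2 hno with h | h
    · exact Or.inr (Or.inr (Or.inl h))
    · exact Or.inr (Or.inr (Or.inr (Or.inl h)))

end Helpers

/-- In a `(5,8)`-coloring of `K_n` (`n ≥ 5`), every connected component of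
every color class containing at least one edge has at most 3 edges, and is isomorphic to one
of `K_2`, `P_3`, `P_4`, `K_{1,3}`, `K_3`. -/
theorem components_of_color_classes {n : ℕ} {α : Type*} (hn : 5 ≤ n)
    (c : Sym2 (Fin n) → α) (hc : IsPQColoring 5 8 c) :
    ∀ (i : α) (K : (colorClass c i).ConnectedComponent),
      CompHasEdge (colorClass c i) K →
      ((colorClass c i).induce K.supp).edgeSet.ncard ≤ 3 ∧
      (ComponentIso (colorClass c i) K (pathGraph 2) ∨
       ComponentIso (colorClass c i) K (pathGraph 3) ∨
       ComponentIso (colorClass c i) K (pathGraph 4) ∨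
       ComponentIso (colorClass c i) K starK13 ∨
       ComponentIso (colorClass c i) K (⊤ : SimpleGraph (Fin 3))) := by
  exact components_of_color_classes' hn c hc
end

section
/- Let n ≥ 5 and let c be a (5,8)-coloring of K_n. Suppose three vertices x, y, z are such that the edges xy, yz, xz all receive the same color i (a monochromatic triangle). Then no edge other than xy, yz, xz has color i, and the 3(n−3) edges joining {x,y,z} to the remaining n−3 vertices receive pairwise distinct colors, each distinct from i. -/
open SimpleGraph

section MonoTriHelpers

lemma fresh5 {n : ℕ} (hn : 5 ≤ n) (a b c d : Fin n) :
    ∃ w : Fin n, w ≠ a ∧ w ≠ b ∧ w ≠ c ∧ w ≠ d := by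
  classical
  have h1 : ({a,b,c,d} : Finset (Fin n)).card ≤ 4 := by
    have e1 := Finset.card_insert_le a ({b,c,d} : Finset (Fin n))
    have e2 := Finset.card_insert_le b ({c,d} : Finset (Fin n))
    have e3 := Finset.card_insert_le c ({d} : Finset (Fin n))
    have e4 : ({d} : Finset (Fin n)).card = 1 := Finset.card_singleton d
    omega
  have hne : (({a,b,c,d} : Finset (Fin n))ᶜ).Nonempty := by
    rw [← Finset.card_pos, Finset.card_compl]
    simp only [Fintype.card_fin]
    omega
  obtain ⟨w, hw⟩ := hne
  simp only [Finset.mem_compl, Finset.mem_insert, Finset.mem_singleton] at hw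
  push_neg at hw
  exact ⟨w, hw.1, hw.2.1, hw.2.2.1, hw.2.2.2⟩

lemma ncard_le7 {α : Type*} (T : Set α) (x1 x2 x3 x4 x5 x6 x7 : α)
    (h : T ⊆ {x1,x2,x3,x4,x5,x6,x7}) : T.ncard ≤ 7 := by
  have hfin : ({x1,x2,x3,x4,x5,x6,x7} : Set α).Finite := by
    apply Set.Finite.insert; apply Set.Finite.insert; apply Set.Finite.insert
    apply Set.Finite.insert; apply Set.Finite.insert; apply Set.Finite.insert
    exact Set.finite_singleton _
  have h0 := Set.ncard_le_ncard h hfin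
  have h7 := Set.ncard_insert_le x1 ({x2,x3,x4,x5,x6,x7} : Set α)
  have h6 := Set.ncard_insert_le x2 ({x3,x4,x5,x6,x7} : Set α)
  have h5 := Set.ncard_insert_le x3 ({x4,x5,x6,x7} : Set α)
  have h4 := Set.ncard_insert_le x4 ({x5,x6,x7} : Set α)
  have h3 := Set.ncard_insert_le x5 ({x6,x7} : Set α)
  have h2 := Set.ncard_insert_le x6 ({x7} : Set α)
  have h1 : ({x7} : Set α).ncard = 1 := Set.ncard_singleton x7
  omega

lemma core {n : ℕ} {α : Type*} (c : Sym2 (Fin n) → α) (hc : IsPQColoring 5 8 c)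
    (v0 v1 v2 v3 v4 : Fin n)
    (d01 : v0 ≠ v1) (d02 : v0 ≠ v2) (d03 : v0 ≠ v3) (d04 : v0 ≠ v4)
    (d12 : v1 ≠ v2) (d13 : v1 ≠ v3) (d14 : v1 ≠ v4)
    (d23 : v2 ≠ v3) (d24 : v2 ≠ v4) (d34 : v3 ≠ v4)
    (i : α) (t01 : c s(v0,v1) = i) (t02 : c s(v0,v2) = i) (t12 : c s(v1,v2) = i) :
    8 ≤ ({i, c s(v0,v3), c s(v0,v4), c s(v1,v3), c s(v1,v4), c s(v2,v3), c s(v2,v4),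
      c s(v3,v4)} : Set α).ncard := by
  classical
  have hS : ({v0,v1,v2,v3,v4} : Finset (Fin n)).card = 5 := by
    rw [Finset.card_insert_of_notMem (by simp [d01,d02,d03,d04]),
        Finset.card_insert_of_notMem (by simp [d12,d13,d14]),
        Finset.card_insert_of_notMem (by simp [d23,d24]),
        Finset.card_insert_of_notMem (by simp [d34]),
        Finset.card_singleton]
  refine le_trans (hc _ hS) (Set.ncard_le_ncard ?_ ?_)
  · rintro j ⟨a, ha, b, hb, hab, rfl⟩
    simp only [Finset.mem_insert, Finset.mem_singleton] at ha hb
    rcases ha with rfl|rfl|rfl|rfl|rfl <;> rcases hb with rfl|rfl|rfl|rfl|rfl <;>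
      simp_all [Sym2.eq_swap, Set.mem_insert_iff]
  · apply Set.Finite.insert; apply Set.Finite.insert; apply Set.Finite.insert
    apply Set.Finite.insert; apply Set.Finite.insert; apply Set.Finite.insert
    apply Set.Finite.insert
    exact Set.finite_singleton _

lemma aux4 {n : ℕ} {α : Type*} (hn : 5 ≤ n) (c : Sym2 (Fin n) → α)
    (hc : IsPQColoring 5 8 c) (v0 v1 v2 v3 : Fin n)
    (d01 : v0 ≠ v1) (d02 : v0 ≠ v2) (d03 : v0 ≠ v3)
    (d12 : v1 ≠ v2) (d13 : v1 ≠ v3) (d23 : v2 ≠ v3)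
    (i : α) (t01 : c s(v0,v1) = i) (t02 : c s(v0,v2) = i) (t12 : c s(v1,v2) = i)
    (h : c s(v0,v3) = i) : False := by
  obtain ⟨v4, h0, h1', h2', h3'⟩ := fresh5 hn v0 v1 v2 v3
  have h8 := core c hc v0 v1 v2 v3 v4 d01 d02 d03 (Ne.symm h0) d12 d13 (Ne.symm h1')
    d23 (Ne.symm h2') (Ne.symm h3') i t01 t02 t12
  rw [h] at h8
  have h7 : ({i, i, c s(v0,v4), c s(v1,v3), c s(v1,v4), c s(v2,v3), c s(v2,v4),
      c s(v3,v4)} : Set α).ncard ≤ 7 := ncard_le7 _ i (c s(v0,v4)) (c s(v1,v3))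
    (c s(v1,v4)) (c s(v2,v3)) (c s(v2,v4)) (c s(v3,v4)) (by
      intro t ht
      simp only [Set.mem_insert_iff, Set.mem_singleton_iff] at ht ⊢
      tauto)
  omega

lemma aux_dup34 {n : ℕ} {α : Type*} (c : Sym2 (Fin n) → α)
    (hc : IsPQColoring 5 8 c) (v0 v1 v2 v3 v4 : Fin n)
    (d01 : v0 ≠ v1) (d02 : v0 ≠ v2) (d03 : v0 ≠ v3) (d04 : v0 ≠ v4)
    (d12 : v1 ≠ v2) (d13 : v1 ≠ v3) (d14 : v1 ≠ v4)
    (d23 : v2 ≠ v3) (d24 : v2 ≠ v4) (d34 : v3 ≠ v4)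
    (i : α) (t01 : c s(v0,v1) = i) (t02 : c s(v0,v2) = i) (t12 : c s(v1,v2) = i)
    (h : c s(v3,v4) = i) : False := by
  have h8 := core c hc v0 v1 v2 v3 v4 d01 d02 d03 d04 d12 d13 d14 d23 d24 d34 i t01 t02 t12
  rw [h] at h8
  have h7 : ({i, c s(v0,v3), c s(v0,v4), c s(v1,v3), c s(v1,v4), c s(v2,v3), c s(v2,v4),
      i} : Set α).ncard ≤ 7 := ncard_le7 _ i (c s(v0,v3)) (c s(v0,v4)) (c s(v1,v3))
    (c s(v1,v4)) (c s(v2,v3)) (c s(v2,v4)) (by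
      intro t ht
      simp only [Set.mem_insert_iff, Set.mem_singleton_iff] at ht ⊢
      tauto)
  omega

lemma aux_pair13 {n : ℕ} {α : Type*} (hn : 5 ≤ n) (c : Sym2 (Fin n) → α)
    (hc : IsPQColoring 5 8 c) (v0 v1 v2 v3 : Fin n)
    (d01 : v0 ≠ v1) (d02 : v0 ≠ v2) (d03 : v0 ≠ v3)
    (d12 : v1 ≠ v2) (d13 : v1 ≠ v3) (d23 : v2 ≠ v3)
    (i : α) (t01 : c s(v0,v1) = i) (t02 : c s(v0,v2) = i) (t12 : c s(v1,v2) = i)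
    (h : c s(v0,v3) = c s(v1,v3)) : False := by
  obtain ⟨v4, h0, h1', h2', h3'⟩ := fresh5 hn v0 v1 v2 v3
  have h8 := core c hc v0 v1 v2 v3 v4 d01 d02 d03 (Ne.symm h0) d12 d13 (Ne.symm h1')
    d23 (Ne.symm h2') (Ne.symm h3') i t01 t02 t12
  rw [h] at h8
  have h7 : ({i, c s(v1,v3), c s(v0,v4), c s(v1,v3), c s(v1,v4), c s(v2,v3), c s(v2,v4),
      c s(v3,v4)} : Set α).ncard ≤ 7 := ncard_le7 _ i (c s(v1,v3)) (c s(v0,v4))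
    (c s(v1,v4)) (c s(v2,v3)) (c s(v2,v4)) (c s(v3,v4)) (by
      intro t ht
      simp only [Set.mem_insert_iff, Set.mem_singleton_iff] at ht ⊢
      tauto)
  omega

lemma aux_pair0304 {n : ℕ} {α : Type*} (c : Sym2 (Fin n) → α)
    (hc : IsPQColoring 5 8 c) (v0 v1 v2 v3 v4 : Fin n)
    (d01 : v0 ≠ v1) (d02 : v0 ≠ v2) (d03 : v0 ≠ v3) (d04 : v0 ≠ v4)
    (d12 : v1 ≠ v2) (d13 : v1 ≠ v3) (d14 : v1 ≠ v4)
    (d23 : v2 ≠ v3) (d24 : v2 ≠ v4) (d34 : v3 ≠ v4)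
    (i : α) (t01 : c s(v0,v1) = i) (t02 : c s(v0,v2) = i) (t12 : c s(v1,v2) = i)
    (h : c s(v0,v3) = c s(v0,v4)) : False := by
  have h8 := core c hc v0 v1 v2 v3 v4 d01 d02 d03 d04 d12 d13 d14 d23 d24 d34 i t01 t02 t12
  rw [h] at h8
  have h7 : ({i, c s(v0,v4), c s(v0,v4), c s(v1,v3), c s(v1,v4), c s(v2,v3), c s(v2,v4),
      c s(v3,v4)} : Set α).ncard ≤ 7 := ncard_le7 _ i (c s(v0,v4)) (c s(v1,v3))
    (c s(v1,v4)) (c s(v2,v3)) (c s(v2,v4)) (c s(v3,v4)) (by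
      intro t ht
      simp only [Set.mem_insert_iff, Set.mem_singleton_iff] at ht ⊢
      tauto)
  omega

lemma aux_pair0314 {n : ℕ} {α : Type*} (c : Sym2 (Fin n) → α)
    (hc : IsPQColoring 5 8 c) (v0 v1 v2 v3 v4 : Fin n)
    (d01 : v0 ≠ v1) (d02 : v0 ≠ v2) (d03 : v0 ≠ v3) (d04 : v0 ≠ v4)
    (d12 : v1 ≠ v2) (d13 : v1 ≠ v3) (d14 : v1 ≠ v4)
    (d23 : v2 ≠ v3) (d24 : v2 ≠ v4) (d34 : v3 ≠ v4)
    (i : α) (t01 : c s(v0,v1) = i) (t02 : c s(v0,v2) = i) (t12 : c s(v1,v2) = i)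
    (h : c s(v0,v3) = c s(v1,v4)) : False := by
  have h8 := core c hc v0 v1 v2 v3 v4 d01 d02 d03 d04 d12 d13 d14 d23 d24 d34 i t01 t02 t12
  rw [h] at h8
  have h7 : ({i, c s(v1,v4), c s(v0,v4), c s(v1,v3), c s(v1,v4), c s(v2,v3), c s(v2,v4),
      c s(v3,v4)} : Set α).ncard ≤ 7 := ncard_le7 _ i (c s(v1,v4)) (c s(v0,v4))
    (c s(v1,v3)) (c s(v2,v3)) (c s(v2,v4)) (c s(v3,v4)) (by
      intro t ht
      simp only [Set.mem_insert_iff, Set.mem_singleton_iff] at ht ⊢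
      tauto)
  omega

end MonoTriHelpers

/-- In a `(5,8)`-coloring of `K_n` (`n ≥ 5`), if `xy`, `yz`, `xz` all have
color `i` (a monochromatic triangle), then no other edge has color `i`, no edge joining
`{x,y,z}` to the remaining vertices has color `i`, and the edges joining `{x,y,z}` to the
remaining vertices receive pairwise distinct colors. -/
theorem mono_triangle_structure {n : ℕ} {α : Type*} (hn : 5 ≤ n)
    (c : Sym2 (Fin n) → α) (hc : IsPQColoring 5 8 c)
    (x y z : Fin n) (i : α) (hxy : x ≠ y) (hyz : y ≠ z) (hxz : x ≠ z)
    (h1 : c s(x, y) = i) (h2 : c s(y, z) = i) (h3 : c s(x, z) = i) :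
    (∀ u v : Fin n, u ≠ v → c s(u, v) = i →
      s(u, v) = s(x, y) ∨ s(u, v) = s(y, z) ∨ s(u, v) = s(x, z)) ∧
    (∀ u v : Fin n, u ∈ ({x, y, z} : Set (Fin n)) → v ∉ ({x, y, z} : Set (Fin n)) →
      c s(u, v) ≠ i) ∧
    (∀ u v u' v' : Fin n, u ∈ ({x, y, z} : Set (Fin n)) → v ∉ ({x, y, z} : Set (Fin n)) →
      u' ∈ ({x, y, z} : Set (Fin n)) → v' ∉ ({x, y, z} : Set (Fin n)) →
      s(u, v) ≠ s(u', v') → c s(u, v) ≠ c s(u', v')) := by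
  
  classical
  have cyx : c s(y, x) = i := by rw [Sym2.eq_swap]; exact h1
  have czy : c s(z, y) = i := by rw [Sym2.eq_swap]; exact h2
  have czx : c s(z, x) = i := by rw [Sym2.eq_swap]; exact h3
  have P1 : ∀ u v : Fin n, u ≠ v → c s(u, v) = i →
      s(u, v) = s(x, y) ∨ s(u, v) = s(y, z) ∨ s(u, v) = s(x, z) := by
    intro u v huv hcuv
    by_cases hu : u ∈ ({x, y, z} : Set (Fin n))
    · by_cases hv : v ∈ ({x, y, z} : Set (Fin n))
      · simp only [Set.mem_insert_iff, Set.mem_singleton_iff] at hu hv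
        rcases hu with rfl|rfl|rfl <;> rcases hv with rfl|rfl|rfl <;>
          simp_all [Sym2.eq_swap]
      · exfalso
        simp only [Set.mem_insert_iff, Set.mem_singleton_iff] at hu hv
        push_neg at hv
        obtain ⟨hvx, hvy, hvz⟩ := hv
        have hu2 : x = u ∨ y = u ∨ z = u := hu.imp Eq.symm (Or.imp Eq.symm Eq.symm)
        rcases hu2 with rfl|rfl|rfl
        · exact aux4 hn c hc x y z v hxy hxz hvx.symm hyz hvy.symm hvz.symm i h1 h3 h2 hcuv
        · exact aux4 hn c hc y x z v hxy.symm hyz hvy.symm hxz hvx.symm hvz.symm i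
            cyx h2 h3 hcuv
        · exact aux4 hn c hc z x y v hxz.symm hyz.symm hvz.symm hxy hvx.symm hvy.symm i
            czx czy h1 hcuv
    · by_cases hv : v ∈ ({x, y, z} : Set (Fin n))
      · exfalso
        have hcvu : c s(v, u) = i := by rw [Sym2.eq_swap]; exact hcuv
        simp only [Set.mem_insert_iff, Set.mem_singleton_iff] at hu hv
        push_neg at hu
        obtain ⟨hux, huy, huz⟩ := hu
        have hv2 : x = v ∨ y = v ∨ z = v := hv.imp Eq.symm (Or.imp Eq.symm Eq.symm)
        rcases hv2 with rfl|rfl|rfl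
        · exact aux4 hn c hc x y z u hxy hxz hux.symm hyz huy.symm huz.symm i h1 h3 h2 hcvu
        · exact aux4 hn c hc y x z u hxy.symm hyz huy.symm hxz hux.symm huz.symm i
            cyx h2 h3 hcvu
        · exact aux4 hn c hc z x y u hxz.symm hyz.symm huz.symm hxy hux.symm huy.symm i
            czx czy h1 hcvu
      · exfalso
        simp only [Set.mem_insert_iff, Set.mem_singleton_iff] at hu hv
        push_neg at hu hv
        exact aux_dup34 c hc x y z u v hxy hxz hu.1.symm hv.1.symm hyz hu.2.1.symm
          hv.2.1.symm hu.2.2.symm hv.2.2.symm huv i h1 h3 h2 hcuv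
  refine ⟨P1, ?_, ?_⟩
  · intro u v hu hv hcuv
    have huv : u ≠ v := by rintro rfl; exact hv hu
    have hP := P1 u v huv hcuv
    rcases hP with h|h|h <;> rw [Sym2.eq_iff] at h <;>
      rcases h with ⟨-, rfl⟩|⟨-, rfl⟩ <;> exact hv (by simp)
  · intro u v u' v' hu hv hu' hv' hne hceq
    simp only [Set.mem_insert_iff, Set.mem_singleton_iff] at hu hv hu' hv'
    push_neg at hv hv'
    obtain ⟨hvx, hvy, hvz⟩ := hv
    obtain ⟨hvx', hvy', hvz'⟩ := hv'
    by_cases hvv : v = v'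
    · subst hvv
      have huu : u ≠ u' := by rintro rfl; exact hne rfl
      have hu2 : x = u ∨ y = u ∨ z = u := hu.imp Eq.symm (Or.imp Eq.symm Eq.symm)
      have hu2' : x = u' ∨ y = u' ∨ z = u' := hu'.imp Eq.symm (Or.imp Eq.symm Eq.symm)
      rcases hu2 with rfl|rfl|rfl <;> rcases hu2' with rfl|rfl|rfl
      · exact absurd rfl huu
      · exact aux_pair13 hn c hc x y z v hxy hxz hvx.symm hyz hvy.symm hvz.symm i
          h1 h3 h2 hceq
      · exact aux_pair13 hn c hc x z y v hxz hxy hvx.symm hyz.symm hvz.symm hvy.symm i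
          h3 h1 czy hceq
      · exact aux_pair13 hn c hc x y z v hxy hxz hvx.symm hyz hvy.symm hvz.symm i
          h1 h3 h2 hceq.symm
      · exact absurd rfl huu
      · exact aux_pair13 hn c hc y z x v hyz hxy.symm hvy.symm hxz.symm hvz.symm hvx.symm i
          h2 cyx czx hceq
      · exact aux_pair13 hn c hc x z y v hxz hxy hvx.symm hyz.symm hvz.symm hvy.symm i
          h3 h1 czy hceq.symm
      · exact aux_pair13 hn c hc y z x v hyz hxy.symm hvy.symm hxz.symm hvz.symm hvx.symm i
          h2 cyx czx hceq.symm
      · exact absurd rfl huu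
    · by_cases huu : u = u'
      · subst huu
        have hu2 : x = u ∨ y = u ∨ z = u := hu.imp Eq.symm (Or.imp Eq.symm Eq.symm)
        rcases hu2 with rfl|rfl|rfl
        · exact aux_pair0304 c hc x y z v v' hxy hxz hvx.symm hvx'.symm hyz hvy.symm
            hvy'.symm hvz.symm hvz'.symm hvv i h1 h3 h2 hceq
        · exact aux_pair0304 c hc y x z v v' hxy.symm hyz hvy.symm hvy'.symm hxz
            hvx.symm hvx'.symm hvz.symm hvz'.symm hvv i cyx h2 h3 hceq
        · exact aux_pair0304 c hc z x y v v' hxz.symm hyz.symm hvz.symm hvz'.symm hxy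
            hvx.symm hvx'.symm hvy.symm hvy'.symm hvv i czx czy h1 hceq
      · have hu2 : x = u ∨ y = u ∨ z = u := hu.imp Eq.symm (Or.imp Eq.symm Eq.symm)
        have hu2' : x = u' ∨ y = u' ∨ z = u' := hu'.imp Eq.symm (Or.imp Eq.symm Eq.symm)
        rcases hu2 with rfl|rfl|rfl <;> rcases hu2' with rfl|rfl|rfl
        · exact absurd rfl huu
        · exact aux_pair0314 c hc x y z v v' hxy hxz hvx.symm hvx'.symm hyz hvy.symm
            hvy'.symm hvz.symm hvz'.symm hvv i h1 h3 h2 hceq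
        · exact aux_pair0314 c hc x z y v v' hxz hxy hvx.symm hvx'.symm hyz.symm
            hvz.symm hvz'.symm hvy.symm hvy'.symm hvv i h3 h1 czy hceq
        · exact aux_pair0314 c hc y x z v v' hxy.symm hyz hvy.symm hvy'.symm hxz
            hvx.symm hvx'.symm hvz.symm hvz'.symm hvv i cyx h2 h3 hceq
        · exact absurd rfl huu
        · exact aux_pair0314 c hc y z x v v' hyz hxy.symm hvy.symm hvy'.symm hxz.symm
            hvz.symm hvz'.symm hvx.symm hvx'.symm hvv i h2 cyx czx hceq
        · exact aux_pair0314 c hc z x y v v' hxz.symm hyz.symm hvz.symm hvz'.symm hxy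
            hvx.symm hvx'.symm hvy.symm hvy'.symm hvv i czx czy h1 hceq
        · exact aux_pair0314 c hc z y x v v' hyz.symm hxz.symm hvz.symm hvz'.symm hxy.symm
            hvy.symm hvy'.symm hvx.symm hvx'.symm hvv i czy czx cyx hceq
        · exact absurd rfl huu
end

section
/- Let n ≥ 5 and let c be a (5,8)-coloring of K_n using m colors. If some color class of c contains a triangle (three vertices with all three edges of the same color), then m ≥ 3(n−3) + 1. -/
open SimpleGraph

set_option maxHeartbeats 1000000 in
open Finset in
lemma key {n m : ℕ} (c : Sym2 (Fin n) → Fin m) (hc : IsPQColoring 5 8 c)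
    {x y z v w : Fin n} (hd : [x, y, z, v, w].Nodup)
    (h1 : c s(x, y) = c s(y, z)) (h2 : c s(y, z) = c s(x, z)) :
    ([c s(x, y), c s(v, x), c s(v, y), c s(v, z), c s(w, x), c s(w, y), c s(w, z),
      c s(v, w)]).Nodup := by
  set L : List (Fin m) := [c s(x, y), c s(v, x), c s(v, y), c s(v, z), c s(w, x), c s(w, y),
      c s(w, z), c s(v, w)] with hL
  have hS : ({x, y, z, v, w} : Finset (Fin n)).card = 5 := by
    simp only [List.nodup_cons, List.mem_cons, List.not_mem_nil, or_false,
      List.nodup_nil, and_true, not_or] at hd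
    rw [card_insert_of_notMem, card_insert_of_notMem, card_insert_of_notMem,
      card_insert_of_notMem] <;> simp_all
  have h8 := hc _ hS
  have hsub : {j : Fin m | ∃ a ∈ ({x, y, z, v, w} : Finset (Fin n)),
      ∃ b ∈ ({x, y, z, v, w} : Finset (Fin n)), a ≠ b ∧ c s(a, b) = j} ⊆ ↑L.toFinset := by
    rintro j ⟨a, ha, b, hb, hab, rfl⟩
    simp only [mem_insert, mem_singleton] at ha hb
    simp only [Finset.mem_coe, List.mem_toFinset, hL, List.mem_cons, List.not_mem_nil, or_false]
    rcases ha with rfl | rfl | rfl | rfl | rfl <;>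
      rcases hb with rfl | rfl | rfl | rfl | rfl <;>
      first
        | exact absurd rfl hab
        | tauto
        | (rw [Sym2.eq_swap]; tauto)
        | (rw [← h1]; tauto)
        | (rw [← h2, ← h1]; tauto)
        | (rw [Sym2.eq_swap, ← h1]; tauto)
        | (rw [Sym2.eq_swap, ← h2, ← h1]; tauto)
  have hle : 8 ≤ L.toFinset.card := by
    calc 8 ≤ _ := h8
    _ ≤ L.toFinset.card := by
      rw [← Set.ncard_coe_finset]
      exact Set.ncard_le_ncard hsub (L.toFinset.finite_toSet)
  have hcard : L.toFinset.card = L.length := le_antisymm L.toFinset_card_le (by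
    rw [show L.length = 8 by simp [hL]]; exact hle)
  rw [← Multiset.coe_nodup]
  exact Multiset.toFinset_card_eq_card_iff_nodup.mp (by simpa using hcard)


set_option maxHeartbeats 1000000 in
open Finset in
/-- If a `(5,8)`-coloring of `K_n` (`n ≥ 5`) with `m` colors has a
monochromatic triangle, then `m ≥ 3(n−3)+1`. -/
theorem mono_triangle_many_colors {n m : ℕ} (hn : 5 ≤ n)
    (c : Sym2 (Fin n) → Fin m) (hc : IsPQColoring 5 8 c)
    (htri : HasMonoTriangle c) :
    3 * (n - 3) + 1 ≤ m := by
  classical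
  have htri' : ∃ x y z : Fin n, x ≠ y ∧ y ≠ z ∧ x ≠ z ∧
      c s(x, y) = c s(y, z) ∧ c s(y, z) = c s(x, z) := htri
  obtain ⟨x, y, z, hxy, hyz, hxz, h1, h2⟩ := htri'
  set T : Finset (Fin n) := Finset.univ \ {x, y, z} with hT
  have hTcard : T.card = n - 3 := by
    rw [hT, card_sdiff_of_subset (subset_univ _)]
    simp [card_insert_of_notMem, hxy, hxz, hyz]
  have hmemT : ∀ v, v ∈ T ↔ v ≠ x ∧ v ≠ y ∧ v ≠ z := by
    intro v; simp [hT, not_or]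
  have pick : ∀ v ∈ T, ∃ w : Fin n, ([x, y, z, v, w]).Nodup := by
    intro v hv
    rw [hmemT] at hv
    have hne : (Finset.univ \ ({x, y, z, v} : Finset (Fin n))).Nonempty := by
      rw [← Finset.card_pos, card_sdiff_of_subset (subset_univ _)]
      have h4 : ({x, y, z, v} : Finset (Fin n)).card ≤ 4 := by
        apply le_trans (card_insert_le _ _)
        apply Nat.succ_le_succ; apply le_trans (card_insert_le _ _)
        apply Nat.succ_le_succ; exact card_insert_le _ _
      have : (Finset.univ : Finset (Fin n)).card = n := by simp
      omega
    obtain ⟨w, hw⟩ := hne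
    simp only [Finset.mem_sdiff, Finset.mem_univ, true_and, mem_insert, mem_singleton,
      not_or] at hw
    refine ⟨w, ?_⟩
    simp only [List.nodup_cons, List.mem_cons, List.not_mem_nil, or_false, not_or,
      List.nodup_nil, and_true]
    obtain ⟨hv1, hv2, hv3⟩ := hv
    obtain ⟨hw1, hw2, hw3, hw4⟩ := hw
    tauto
  set g : Fin n × Fin 3 → Fin m := fun p => c s(p.1, ![x, y, z] p.2) with hg
  have hinj : Set.InjOn g ↑(T ×ˢ (Finset.univ : Finset (Fin 3))) := by
    rintro ⟨v, t⟩ hvt ⟨u, s⟩ hus heq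
    simp only [Finset.coe_product, Set.mem_prod, Finset.mem_coe] at hvt hus
    have hv := hvt.1; have hu := hus.1
    by_cases hvu : v = u
    · subst hvu
      obtain ⟨w, hw⟩ := pick v hv
      have hkey := key c hc hw h1 h2
      simp only [List.nodup_cons, List.mem_cons, List.not_mem_nil, or_false, not_or,
        List.nodup_nil, and_true] at hkey
      simp only [hg] at heq
      congr 1
      fin_cases t <;> fin_cases s <;>
        simp_all [Matrix.cons_val_zero, Matrix.cons_val_one, Matrix.head_cons]
    · exfalso
      have hnd : ([x, y, z, v, u]).Nodup := by
        rw [hmemT] at hv hu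
        simp only [List.nodup_cons, List.mem_cons, List.not_mem_nil, or_false, not_or,
          List.nodup_nil, and_true]
        tauto
      have hkey := key c hc hnd h1 h2
      simp only [List.nodup_cons, List.mem_cons, List.not_mem_nil, or_false, not_or,
        List.nodup_nil, and_true] at hkey
      simp only [hg] at heq
      fin_cases t <;> fin_cases s <;>
        simp_all [Matrix.cons_val_zero, Matrix.cons_val_one, Matrix.head_cons]
  have hnotmem : c s(x, y) ∉ (T ×ˢ (Finset.univ : Finset (Fin 3))).image g := by
    simp only [Finset.mem_image, Finset.mem_product, not_exists, not_and]
    rintro ⟨v, t⟩ ⟨hv, -⟩ heq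
    obtain ⟨w, hw⟩ := pick v hv
    have hkey := key c hc hw h1 h2
    simp only [List.nodup_cons, List.mem_cons, List.not_mem_nil, or_false, not_or,
      List.nodup_nil, and_true] at hkey
    simp only [hg] at heq
    fin_cases t <;>
      simp_all [Matrix.cons_val_zero, Matrix.cons_val_one, Matrix.head_cons]
  have hcard : (insert (c s(x, y)) ((T ×ˢ (Finset.univ : Finset (Fin 3))).image g)).card
      = 3 * (n - 3) + 1 := by
    rw [card_insert_of_notMem hnotmem, Finset.card_image_of_injOn hinj,
      Finset.card_product, hTcard]
    simp [mul_comm]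
  calc 3 * (n - 3) + 1 = _ := hcard.symm
    _ ≤ (Finset.univ : Finset (Fin m)).card := card_le_card (subset_univ _)
    _ = m := by simp
end

section
/- Let n ≥ 5 and let c be a (5,8)-coloring of K_n with m colors and with no monochromatic triangle. Then binom(n,2) = |A| + 2|B| + 3|C| + 3|D|, where B = B_1 ∪ B_2. -/
open SimpleGraph

set_option maxHeartbeats 1000000
section EdgeCountAux
namespace ECA
open Finset

variable {n m : ℕ} {c : Sym2 (Fin n) → Fin m}

lemma colors_eq_image (S : Finset (Fin n)) :
    {j : Fin m | ∃ x ∈ S, ∃ y ∈ S, x ≠ y ∧ c s(x, y) = j}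
      = ↑((S.offDiag.image Sym2.mk.uncurry).image c) := by
  ext j
  simp only [Set.mem_setOf_eq, coe_image, Set.mem_image, mem_coe, Finset.mem_image,
    mem_offDiag, Prod.exists]
  constructor
  · rintro ⟨x, hx, y, hy, hxy, rfl⟩
    exact ⟨s(x, y), ⟨x, y, ⟨hx, hy, hxy⟩, rfl⟩, rfl⟩
  · rintro ⟨e, ⟨x, y, ⟨hx, hy, hxy⟩, rfl⟩, rfl⟩
    exact ⟨x, hx, y, hy, hxy, rfl⟩

lemma no_four (hn : 5 ≤ n) (hc : IsPQColoring 5 8 c)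
    {x₁ y₁ x₂ y₂ x₃ y₃ x₄ y₄ : Fin n}
    (h₁ : x₁ ≠ y₁) (h₂ : x₂ ≠ y₂) (h₃ : x₃ ≠ y₃) (h₄ : x₄ ≠ y₄)
    (d₁₂ : s(x₁,y₁) ≠ s(x₂,y₂)) (d₁₃ : s(x₁,y₁) ≠ s(x₃,y₃)) (d₁₄ : s(x₁,y₁) ≠ s(x₄,y₄))
    (d₂₃ : s(x₂,y₂) ≠ s(x₃,y₃)) (d₂₄ : s(x₂,y₂) ≠ s(x₄,y₄)) (d₃₄ : s(x₃,y₃) ≠ s(x₄,y₄))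
    (hcard : ({x₁,y₁,x₂,y₂,x₃,y₃,x₄,y₄} : Finset (Fin n)).card ≤ 5)
    (e₂ : c s(x₂,y₂) = c s(x₁,y₁)) (e₃ : c s(x₃,y₃) = c s(x₁,y₁))
    (e₄ : c s(x₄,y₄) = c s(x₁,y₁)) : False := by
  obtain ⟨S, hsub, hS5⟩ := Finset.exists_superset_card_eq hcard (by simpa using hn)
  have h8 := hc S hS5
  rw [colors_eq_image, Set.ncard_coe_finset] at h8
  set E : Finset (Sym2 (Fin n)) := S.offDiag.image Sym2.mk.uncurry with hE
  have hmemE : ∀ (x y : Fin n), x ≠ y → x ∈ S → y ∈ S → s(x,y) ∈ E := by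
    intro x y hxy hx hy
    exact Finset.mem_image.2 ⟨(x, y), mem_offDiag.2 ⟨hx, hy, hxy⟩, rfl⟩
  have hv : ∀ t ∈ ({x₁,y₁,x₂,y₂,x₃,y₃,x₄,y₄} : Finset (Fin n)), t ∈ S := fun t ht => hsub ht
  have m1 : s(x₁,y₁) ∈ E := hmemE _ _ h₁ (hv _ (by simp)) (hv _ (by simp))
  have m2 : s(x₂,y₂) ∈ E := hmemE _ _ h₂ (hv _ (by simp)) (hv _ (by simp))
  have m3 : s(x₃,y₃) ∈ E := hmemE _ _ h₃ (hv _ (by simp)) (hv _ (by simp))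
  have m4 : s(x₄,y₄) ∈ E := hmemE _ _ h₄ (hv _ (by simp)) (hv _ (by simp))
  have hEcard : E.card = 10 := by rw [hE, Sym2.card_image_offDiag, hS5]; rfl
  set E' : Finset (Sym2 (Fin n)) := ((E.erase s(x₂,y₂)).erase s(x₃,y₃)).erase s(x₄,y₄) with hE'
  have hsubim : E.image c ⊆ E'.image c := by
    intro j hj
    obtain ⟨e, he, rfl⟩ := Finset.mem_image.1 hj
    have hm1' : s(x₁,y₁) ∈ E' := by
      simp only [hE', Finset.mem_erase]
      exact ⟨d₁₄, d₁₃, d₁₂, m1⟩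
    by_cases he2 : e = s(x₂,y₂)
    · exact Finset.mem_image.2 ⟨s(x₁,y₁), hm1', by rw [he2, e₂]⟩
    by_cases he3 : e = s(x₃,y₃)
    · exact Finset.mem_image.2 ⟨s(x₁,y₁), hm1', by rw [he3, e₃]⟩
    by_cases he4 : e = s(x₄,y₄)
    · exact Finset.mem_image.2 ⟨s(x₁,y₁), hm1', by rw [he4, e₄]⟩
    · exact Finset.mem_image.2 ⟨e, by simp only [hE', Finset.mem_erase]; exact ⟨he4, he3, he2, he⟩, rfl⟩
  have hE'card : E'.card = 7 := by
    have c4 : s(x₄,y₄) ∈ (E.erase s(x₂,y₂)).erase s(x₃,y₃) :=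
      Finset.mem_erase.2 ⟨d₃₄.symm, Finset.mem_erase.2 ⟨d₂₄.symm, m4⟩⟩
    have c3 : s(x₃,y₃) ∈ E.erase s(x₂,y₂) := Finset.mem_erase.2 ⟨d₂₃.symm, m3⟩
    rw [hE', Finset.card_erase_of_mem c4, Finset.card_erase_of_mem c3,
      Finset.card_erase_of_mem m2, hEcard]
  have : (E.image c).card ≤ 7 := by
    calc (E.image c).card ≤ (E'.image c).card := Finset.card_le_card hsubim
    _ ≤ E'.card := Finset.card_image_le
    _ = 7 := hE'card
  omega


lemma no_mono_tri (htri : ¬ HasMonoTriangle c) {i : Fin m} {x y z : Fin n}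
    (hxy : (colorClass c i).Adj x y) (hyz : (colorClass c i).Adj y z)
    (hxz : (colorClass c i).Adj x z) : False :=
  htri ⟨x, y, z, hxy.1, hyz.1, hxz.1, by rw [hxy.2, hyz.2], by rw [hyz.2, hxz.2]⟩

lemma card_le_five (a b d e f : Fin n) : ({a,b,d,e,f} : Finset (Fin n)).card ≤ 5 :=
  le_trans (card_insert_le _ _) <| by
    refine le_trans (Nat.succ_le_succ (card_insert_le _ _)) ?_
    refine le_trans (Nat.succ_le_succ (Nat.succ_le_succ (card_insert_le _ _))) ?_
    refine le_trans (Nat.succ_le_succ (Nat.succ_le_succ (Nat.succ_le_succ (card_insert_le _ _)))) ?_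
    simp

lemma no_four_adj (hn : 5 ≤ n) (hc : IsPQColoring 5 8 c) {i : Fin m}
    {x₁ y₁ x₂ y₂ x₃ y₃ x₄ y₄ : Fin n}
    (a₁ : (colorClass c i).Adj x₁ y₁) (a₂ : (colorClass c i).Adj x₂ y₂)
    (a₃ : (colorClass c i).Adj x₃ y₃) (a₄ : (colorClass c i).Adj x₄ y₄)
    (d₁₂ : s(x₁,y₁) ≠ s(x₂,y₂)) (d₁₃ : s(x₁,y₁) ≠ s(x₃,y₃)) (d₁₄ : s(x₁,y₁) ≠ s(x₄,y₄))
    (d₂₃ : s(x₂,y₂) ≠ s(x₃,y₃)) (d₂₄ : s(x₂,y₂) ≠ s(x₄,y₄)) (d₃₄ : s(x₃,y₃) ≠ s(x₄,y₄))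
    {p₁ p₂ p₃ p₄ p₅ : Fin n}
    (hsub : ({x₁,y₁,x₂,y₂,x₃,y₃,x₄,y₄} : Finset (Fin n)) ⊆ {p₁,p₂,p₃,p₄,p₅}) : False :=
  no_four hn hc a₁.1 a₂.1 a₃.1 a₄.1 d₁₂ d₁₃ d₁₄ d₂₃ d₂₄ d₃₄
    (le_trans (Finset.card_le_card hsub) (card_le_five _ _ _ _ _))
    (by rw [a₂.2, a₁.2]) (by rw [a₃.2, a₁.2]) (by rw [a₄.2, a₁.2])

lemma walk_closed {V : Type*} {G : SimpleGraph V} {X : Set V}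
    (hcl : ∀ x ∈ X, ∀ y, G.Adj x y → y ∈ X) :
    ∀ {u w : V}, G.Walk u w → u ∈ X → w ∈ X := by
  intro u w p
  induction p with
  | nil => exact id
  | cons h _ ih => exact fun hu => ih (hcl _ hu _ h)

lemma supp_subset_of_closed {V : Type*} {G : SimpleGraph V} {u : V} {X : Set V}
    (hu : u ∈ X) (hcl : ∀ x ∈ X, ∀ y, G.Adj x y → y ∈ X) :
    (G.connectedComponentMk u).supp ⊆ X := by
  intro w hw
  rw [ConnectedComponent.mem_supp_iff, ConnectedComponent.eq] at hw
  obtain ⟨p⟩ := hw.symm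
  exact walk_closed hcl p hu

def IsShape2 {V : Type*} (G : SimpleGraph V) (K : G.ConnectedComponent) : Prop :=
  ∃ u v : V, u ≠ v ∧ G.Adj u v ∧ K.supp = {u, v}

def IsShape3 {V : Type*} (G : SimpleGraph V) (K : G.ConnectedComponent) : Prop :=
  ∃ x y z : V, x ≠ y ∧ x ≠ z ∧ y ≠ z ∧ G.Adj x y ∧ G.Adj y z ∧ ¬ G.Adj x z ∧
    K.supp = {x, y, z}

def IsShape4 {V : Type*} (G : SimpleGraph V) (K : G.ConnectedComponent) : Prop :=
  ∃ w x y z : V, w ≠ x ∧ w ≠ y ∧ w ≠ z ∧ x ≠ y ∧ x ≠ z ∧ y ≠ z ∧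
    G.Adj w x ∧ G.Adj x y ∧ G.Adj y z ∧ ¬ G.Adj w y ∧ ¬ G.Adj w z ∧ ¬ G.Adj x z ∧
    K.supp = {w, x, y, z}

def IsShapeS {V : Type*} (G : SimpleGraph V) (K : G.ConnectedComponent) : Prop :=
  ∃ u a b d : V, u ≠ a ∧ u ≠ b ∧ u ≠ d ∧ a ≠ b ∧ a ≠ d ∧ b ≠ d ∧
    G.Adj u a ∧ G.Adj u b ∧ G.Adj u d ∧ ¬ G.Adj a b ∧ ¬ G.Adj a d ∧ ¬ G.Adj b d ∧
    K.supp = {u, a, b, d}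

lemma classify (hn : 5 ≤ n) (hc : IsPQColoring 5 8 c) (htri : ¬ HasMonoTriangle c)
    (i : Fin m) (K : (colorClass c i).ConnectedComponent)
    (hK : CompHasEdge (colorClass c i) K) :
    IsShape2 _ K ∨ IsShape3 _ K ∨ IsShape4 _ K ∨ IsShapeS _ K := by
  obtain ⟨u, v, hu, huv⟩ := hK
  rw [ConnectedComponent.mem_supp_iff] at hu
  by_cases h3 : ∃ p a b d : Fin n, (colorClass c i).connectedComponentMk p = K ∧
      a ≠ b ∧ a ≠ d ∧ b ≠ d ∧ (colorClass c i).Adj p a ∧ (colorClass c i).Adj p b ∧ (colorClass c i).Adj p d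
  · -- star case
    obtain ⟨p, a, b, d, hp, hab, had, hbd, hpa, hpb, hpd⟩ := h3
    have hpa' : p ≠ a := hpa.ne
    have hpb' : p ≠ b := hpb.ne
    have hpd' : p ≠ d := hpd.ne
    have nbr : ∀ w, (colorClass c i).Adj p w → w = a ∨ w = b ∨ w = d := by
      intro w hw
      by_contra hwcon
      push_neg at hwcon
      obtain ⟨hwa, hwb, hwd⟩ := hwcon
      have hpw : p ≠ w := hw.ne
      refine no_four_adj hn hc hpa hpb hpd hw ?_ ?_ ?_ ?_ ?_ ?_
        (p₁ := p) (p₂ := a) (p₃ := b) (p₄ := d) (p₅ := w) ?_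
      all_goals first
        | (intro hcon; rw [Sym2.eq_iff] at hcon; tauto)
        | (intro t ht; simp only [mem_insert, mem_singleton] at ht ⊢; tauto)
    have leaf : ∀ w t, (colorClass c i).Adj p w → (colorClass c i).Adj w t → t = p := by
      intro w t hpw hwt
      by_contra htp
      have hwp : w ≠ p := hpw.ne'
      have hpw' : p ≠ w := hpw.ne
      have hwt' : w ≠ t := hwt.ne
      have hpt : p ≠ t := fun h => htp h.symm
      refine no_four_adj hn hc hpa hpb hpd hwt ?_ ?_ ?_ ?_ ?_ ?_
        (p₁ := p) (p₂ := a) (p₃ := b) (p₄ := d) (p₅ := t) ?_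
      all_goals first
        | (intro hcon; rw [Sym2.eq_iff] at hcon; tauto)
        | (rcases nbr w hpw with rfl | rfl | rfl <;>
            (intro t' ht'; simp only [mem_insert, mem_singleton] at ht' ⊢; tauto))
    have hsupp : K.supp = {p, a, b, d} := by
      rw [← hp]
      apply Set.Subset.antisymm
      · apply supp_subset_of_closed (by simp)
        intro x hx y hxy
        simp only [Set.mem_insert_iff, Set.mem_singleton_iff] at hx ⊢
        rcases hx with rfl | rfl | rfl | rfl
        · rcases nbr y hxy with rfl | rfl | rfl <;> tauto
        · exact Or.inl (leaf x y hpa hxy)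
        · exact Or.inl (leaf x y hpb hxy)
        · exact Or.inl (leaf x y hpd hxy)
      · intro x hx
        simp only [Set.mem_insert_iff, Set.mem_singleton_iff] at hx
        rw [ConnectedComponent.mem_supp_iff]
        rcases hx with rfl | rfl | rfl | rfl
        · rfl
        · exact ConnectedComponent.sound hpa.symm.reachable
        · exact ConnectedComponent.sound hpb.symm.reachable
        · exact ConnectedComponent.sound hpd.symm.reachable
    exact Or.inr (Or.inr (Or.inr ⟨p, a, b, d, hpa', hpb', hpd', hab, had, hbd, hpa, hpb, hpd,
      (fun h => no_mono_tri htri hpa h hpb), (fun h => no_mono_tri htri hpa h hpd),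
      (fun h => no_mono_tri htri hpb h hpd), hsupp⟩))
  by_cases h4 : ∃ w x y z : Fin n, (colorClass c i).connectedComponentMk w = K ∧
      w ≠ x ∧ w ≠ y ∧ w ≠ z ∧ x ≠ y ∧ x ≠ z ∧ y ≠ z ∧ (colorClass c i).Adj w x ∧ (colorClass c i).Adj x y ∧ (colorClass c i).Adj y z
  · -- P4 case
    obtain ⟨w, x, y, z, hw, hwx', hwy', hwz', hxy', hxz', hyz', hwx, hxy, hyz⟩ := h4
    have s1 : x ≠ w := hwx'.symm
    have s2 : y ≠ w := hwy'.symm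
    have s3 : z ≠ w := hwz'.symm
    have s4 : y ≠ x := hxy'.symm
    have s5 : z ≠ x := hxz'.symm
    have s6 : z ≠ y := hyz'.symm
    have hwy : ¬ (colorClass c i).Adj w y := fun h => no_mono_tri htri hwx hxy h
    have hxz : ¬ (colorClass c i).Adj x z := fun h => no_mono_tri htri hxy hyz h
    have hwz : ¬ (colorClass c i).Adj w z := by
      intro h
      refine no_four_adj hn hc hwx hxy hyz h ?_ ?_ ?_ ?_ ?_ ?_
        (p₁ := w) (p₂ := x) (p₃ := y) (p₄ := z) (p₅ := z) ?_
      all_goals first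
        | (intro hcon; rw [Sym2.eq_iff] at hcon; tauto)
        | (intro t ht; simp only [mem_insert, mem_singleton] at ht ⊢; tauto)
    have hx_mem : (colorClass c i).connectedComponentMk x = K := by
      rw [← hw]; exact ConnectedComponent.sound hwx.symm.reachable
    have hy_mem : (colorClass c i).connectedComponentMk y = K := by
      rw [← hx_mem]; exact ConnectedComponent.sound hxy.symm.reachable
    have nbrw : ∀ t, (colorClass c i).Adj w t → t = x := by
      intro t ht
      by_contra htx
      by_cases hty : t = y
      · exact hwy (hty ▸ ht)
      by_cases htz : t = z
      · exact hwz (htz ▸ ht)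
      have hwt : w ≠ t := ht.ne
      have htw : t ≠ w := ht.ne'
      refine no_four_adj hn hc ht hwx hxy hyz ?_ ?_ ?_ ?_ ?_ ?_
        (p₁ := w) (p₂ := x) (p₃ := y) (p₄ := z) (p₅ := t) ?_
      all_goals first
        | (intro hcon; rw [Sym2.eq_iff] at hcon; tauto)
        | (intro t' ht'; simp only [mem_insert, mem_singleton] at ht' ⊢; tauto)
    have nbrz : ∀ t, (colorClass c i).Adj z t → t = y := by
      intro t ht
      by_contra hty
      by_cases htx : t = x
      · exact hxz (htx ▸ ht).symm
      by_cases htw : t = w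
      · exact hwz (htw ▸ ht).symm
      have hzt : z ≠ t := ht.ne
      have htz : t ≠ z := ht.ne'
      refine no_four_adj hn hc ht hwx hxy hyz ?_ ?_ ?_ ?_ ?_ ?_
        (p₁ := w) (p₂ := x) (p₃ := y) (p₄ := z) (p₅ := t) ?_
      all_goals first
        | (intro hcon; rw [Sym2.eq_iff] at hcon; tauto)
        | (intro t' ht'; simp only [mem_insert, mem_singleton] at ht' ⊢; tauto)
    have nbrx : ∀ t, (colorClass c i).Adj x t → t = w ∨ t = y := by
      intro t ht
      by_contra hcon
      push_neg at hcon
      obtain ⟨htw, hty⟩ := hcon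
      by_cases htz : t = z
      · exact hxz (htz ▸ ht)
      exact h3 ⟨x, w, y, t, hx_mem, hwy', (fun h => htw h.symm), (fun h => hty h.symm),
        hwx.symm, hxy, ht⟩
    have nbry : ∀ t, (colorClass c i).Adj y t → t = x ∨ t = z := by
      intro t ht
      by_contra hcon
      push_neg at hcon
      obtain ⟨htx, htz⟩ := hcon
      by_cases htw : t = w
      · exact hwy (htw ▸ ht).symm
      exact h3 ⟨y, x, z, t, hy_mem, hxz', (fun h => htx h.symm), (fun h => htz h.symm),
        hxy.symm, hyz, ht⟩
    have hsupp : K.supp = {w, x, y, z} := by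
      rw [← hw]
      apply Set.Subset.antisymm
      · apply supp_subset_of_closed (by simp)
        intro s hs t hst
        simp only [Set.mem_insert_iff, Set.mem_singleton_iff] at hs ⊢
        rcases hs with rfl | rfl | rfl | rfl
        · exact Or.inr (Or.inl (nbrw t hst))
        · rcases nbrx t hst with rfl | rfl <;> tauto
        · rcases nbry t hst with rfl | rfl <;> tauto
        · exact Or.inr (Or.inr (Or.inl (nbrz t hst)))
      · intro s hs
        simp only [Set.mem_insert_iff, Set.mem_singleton_iff] at hs
        rw [ConnectedComponent.mem_supp_iff]
        rcases hs with rfl | rfl | rfl | rfl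
        · rfl
        · exact ConnectedComponent.sound hwx.symm.reachable
        · exact (ConnectedComponent.sound hxy.symm.reachable).trans
            (ConnectedComponent.sound hwx.symm.reachable)
        · exact (ConnectedComponent.sound hyz.symm.reachable).trans
            ((ConnectedComponent.sound hxy.symm.reachable).trans
              (ConnectedComponent.sound hwx.symm.reachable))
    exact Or.inr (Or.inr (Or.inl ⟨w, x, y, z, hwx', hwy', hwz', hxy', hxz', hyz',
      hwx, hxy, hyz, hwy, hwz, hxz, hsupp⟩))
  by_cases h2 : ∃ x y z : Fin n, (colorClass c i).connectedComponentMk x = K ∧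
      x ≠ y ∧ x ≠ z ∧ y ≠ z ∧ (colorClass c i).Adj x y ∧ (colorClass c i).Adj y z
  · -- P3 case
    obtain ⟨x, y, z, hx, hxy', hxz', hyz', hxy, hyz⟩ := h2
    have hxz : ¬ (colorClass c i).Adj x z := fun h => no_mono_tri htri hxy hyz h
    have hy_mem : (colorClass c i).connectedComponentMk y = K := by
      rw [← hx]; exact ConnectedComponent.sound hxy.symm.reachable
    have hz_mem : (colorClass c i).connectedComponentMk z = K := by
      rw [← hy_mem]; exact ConnectedComponent.sound hyz.symm.reachable
    have nbrx : ∀ t, (colorClass c i).Adj x t → t = y := by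
      intro t ht
      by_contra hty
      by_cases htz : t = z
      · exact hxz (htz ▸ ht)
      have ht_mem : (colorClass c i).connectedComponentMk t = K := by
        rw [← hx]; exact ConnectedComponent.sound ht.symm.reachable
      exact h4 ⟨t, x, y, z, ht_mem, ht.ne', hty, htz, hxy', hxz', hyz', ht.symm, hxy, hyz⟩
    have nbrz : ∀ t, (colorClass c i).Adj z t → t = y := by
      intro t ht
      by_contra hty
      by_cases htx : t = x
      · exact hxz (htx ▸ ht).symm
      have ht_mem : (colorClass c i).connectedComponentMk t = K := by
        rw [← hz_mem]; exact ConnectedComponent.sound ht.symm.reachable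
      exact h4 ⟨t, z, y, x, ht_mem, ht.ne', hty, htx, hyz'.symm, hxz'.symm, hxy'.symm,
        ht.symm, hyz.symm, hxy.symm⟩
    have nbry : ∀ t, (colorClass c i).Adj y t → t = x ∨ t = z := by
      intro t ht
      by_contra hcon
      push_neg at hcon
      obtain ⟨htx, htz⟩ := hcon
      exact h3 ⟨y, x, z, t, hy_mem, hxz', (fun h => htx h.symm), (fun h => htz h.symm),
        hxy.symm, hyz, ht⟩
    have hsupp : K.supp = {x, y, z} := by
      rw [← hx]
      apply Set.Subset.antisymm
      · apply supp_subset_of_closed (by simp)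
        intro s hs t hst
        simp only [Set.mem_insert_iff, Set.mem_singleton_iff] at hs ⊢
        rcases hs with rfl | rfl | rfl
        · exact Or.inr (Or.inl (nbrx t hst))
        · rcases nbry t hst with rfl | rfl <;> tauto
        · exact Or.inr (Or.inl (nbrz t hst))
      · intro s hs
        simp only [Set.mem_insert_iff, Set.mem_singleton_iff] at hs
        rw [ConnectedComponent.mem_supp_iff]
        rcases hs with rfl | rfl | rfl
        · rfl
        · exact ConnectedComponent.sound hxy.symm.reachable
        · exact (ConnectedComponent.sound hyz.symm.reachable).trans
            (ConnectedComponent.sound hxy.symm.reachable)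
    exact Or.inr (Or.inl ⟨x, y, z, hxy', hxz', hyz', hxy, hyz, hxz, hsupp⟩)
  · -- K2 case
    have hv_mem : (colorClass c i).connectedComponentMk v = K := by
      rw [← hu]; exact ConnectedComponent.sound huv.symm.reachable
    have nbru : ∀ t, (colorClass c i).Adj u t → t = v := by
      intro t ht
      by_contra htv
      have ht_mem : (colorClass c i).connectedComponentMk t = K := by
        rw [← hu]; exact ConnectedComponent.sound ht.symm.reachable
      exact h2 ⟨t, u, v, ht_mem, ht.ne', htv, huv.ne, ht.symm, huv⟩
    have nbrv : ∀ t, (colorClass c i).Adj v t → t = u := by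
      intro t ht
      by_contra htu
      have ht_mem : (colorClass c i).connectedComponentMk t = K := by
        rw [← hv_mem]; exact ConnectedComponent.sound ht.symm.reachable
      exact h2 ⟨t, v, u, ht_mem, ht.ne', htu, huv.ne', ht.symm, huv.symm⟩
    have hsupp : K.supp = {u, v} := by
      rw [← hu]
      apply Set.Subset.antisymm
      · apply supp_subset_of_closed (by simp)
        intro s hs t hst
        simp only [Set.mem_insert_iff, Set.mem_singleton_iff] at hs ⊢
        rcases hs with rfl | rfl
        · exact Or.inr (nbru t hst)
        · exact Or.inl (nbrv t hst)
      · intro s hs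
        simp only [Set.mem_insert_iff, Set.mem_singleton_iff] at hs
        rw [ConnectedComponent.mem_supp_iff]
        rcases hs with rfl | rfl
        · rfl
        · exact ConnectedComponent.sound huv.symm.reachable
    exact Or.inl ⟨u, v, huv.ne, huv, hsupp⟩


lemma iso2 {G : SimpleGraph (Fin n)} {u v : Fin n} (huv : u ≠ v) (hadj : G.Adj u v) :
    Nonempty (G.induce {u, v} ≃g pathGraph 2) := by
  refine ⟨SimpleGraph.Iso.symm ⟨Equiv.ofBijective
    (fun k : Fin 2 => if k = 0 then ⟨u, by simp⟩ else ⟨v, by simp⟩ :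
      Fin 2 → ↥({u, v} : Set (Fin n))) ⟨?_, ?_⟩, ?_⟩⟩
  · intro a b hab
    fin_cases a <;> fin_cases b <;> simp_all <;> exact absurd (Subtype.mk.injEq .. ▸ hab) (by simpa using huv)
  · rintro ⟨w, hw⟩
    rcases hw with rfl | hw
    · exact ⟨0, by simp⟩
    · rw [Set.mem_singleton_iff] at hw
      subst hw
      exact ⟨1, by simp⟩
  · intro a b
    fin_cases a <;> fin_cases b <;>
      simp [Equiv.ofBijective, pathGraph_adj, hadj, hadj.symm, G.irrefl]


lemma iso3 {G : SimpleGraph (Fin n)} {x y z : Fin n}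
    (hxy' : x ≠ y) (hxz' : x ≠ z) (hyz' : y ≠ z)
    (hxy : G.Adj x y) (hyz : G.Adj y z) (hxz : ¬ G.Adj x z) :
    Nonempty (G.induce {x, y, z} ≃g pathGraph 3) := by
  refine ⟨SimpleGraph.Iso.symm ⟨Equiv.ofBijective
    (fun k : Fin 3 => if k = 0 then ⟨x, by simp⟩ else if k = 1 then ⟨y, by simp⟩
      else ⟨z, by simp⟩ : Fin 3 → ↥({x, y, z} : Set (Fin n))) ⟨?_, ?_⟩, ?_⟩⟩
  · intro a b hab
    fin_cases a <;> fin_cases b <;> simp_all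
  · rintro ⟨w, hw⟩
    rcases hw with rfl | rfl | hw
    · exact ⟨0, by simp⟩
    · exact ⟨1, by simp⟩
    · rw [Set.mem_singleton_iff] at hw
      subst hw
      exact ⟨2, by simp⟩
  · intro a b
    fin_cases a <;> fin_cases b <;>
      simp [Equiv.ofBijective, pathGraph_adj, hxy, hyz, hxz, hxy.symm, hyz.symm,
        show ¬ G.Adj z x from fun h => hxz h.symm, G.irrefl] <;> omega

lemma iso4 {G : SimpleGraph (Fin n)} {w x y z : Fin n}
    (hwx' : w ≠ x) (hwy' : w ≠ y) (hwz' : w ≠ z) (hxy' : x ≠ y) (hxz' : x ≠ z) (hyz' : y ≠ z)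
    (hwx : G.Adj w x) (hxy : G.Adj x y) (hyz : G.Adj y z)
    (hwy : ¬ G.Adj w y) (hwz : ¬ G.Adj w z) (hxz : ¬ G.Adj x z) :
    Nonempty (G.induce {w, x, y, z} ≃g pathGraph 4) := by
  refine ⟨SimpleGraph.Iso.symm ⟨Equiv.ofBijective
    (fun k : Fin 4 => if k = 0 then ⟨w, by simp⟩ else if k = 1 then ⟨x, by simp⟩
      else if k = 2 then ⟨y, by simp⟩ else ⟨z, by simp⟩ :
      Fin 4 → ↥({w, x, y, z} : Set (Fin n))) ⟨?_, ?_⟩, ?_⟩⟩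
  · intro a b hab
    fin_cases a <;> fin_cases b <;> simp_all
  · rintro ⟨t, ht⟩
    rcases ht with rfl | rfl | rfl | ht
    · exact ⟨0, by simp⟩
    · exact ⟨1, by simp⟩
    · exact ⟨2, by simp⟩
    · rw [Set.mem_singleton_iff] at ht
      subst ht
      exact ⟨3, by simp⟩
  · intro a b
    fin_cases a <;> fin_cases b <;>
      simp [Equiv.ofBijective, pathGraph_adj, hwx, hxy, hyz, hwx.symm, hxy.symm, hyz.symm,
        hwy, hwz, hxz, show ¬ G.Adj y w from fun h => hwy h.symm,
        show ¬ G.Adj z w from fun h => hwz h.symm,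
        show ¬ G.Adj z x from fun h => hxz h.symm, G.irrefl] <;> omega

lemma isoS {G : SimpleGraph (Fin n)} {u a b d : Fin n}
    (hua' : u ≠ a) (hub' : u ≠ b) (hud' : u ≠ d) (hab' : a ≠ b) (had' : a ≠ d) (hbd' : b ≠ d)
    (hua : G.Adj u a) (hub : G.Adj u b) (hud : G.Adj u d)
    (hab : ¬ G.Adj a b) (had : ¬ G.Adj a d) (hbd : ¬ G.Adj b d) :
    Nonempty (G.induce {u, a, b, d} ≃g starK13) := by
  refine ⟨SimpleGraph.Iso.symm ⟨Equiv.ofBijective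
    (Sum.elim (fun _ => ⟨u, by simp⟩)
      (fun j : Fin 3 => if j = 0 then ⟨a, by simp⟩ else if j = 1 then ⟨b, by simp⟩
        else ⟨d, by simp⟩) : Fin 1 ⊕ Fin 3 → ↥({u, a, b, d} : Set (Fin n))) ⟨?_, ?_⟩, ?_⟩⟩
  · rintro (p | p) (q | q) h
    · fin_cases p <;> fin_cases q <;> simp_all
    · fin_cases p <;> fin_cases q <;> simp_all
    · fin_cases p <;> fin_cases q <;> simp_all
    · fin_cases p <;> fin_cases q <;> simp_all
  · rintro ⟨t, ht⟩
    rcases ht with rfl | rfl | rfl | ht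
    · exact ⟨Sum.inl 0, by simp⟩
    · exact ⟨Sum.inr 0, by simp⟩
    · exact ⟨Sum.inr 1, by simp⟩
    · rw [Set.mem_singleton_iff] at ht
      subst ht
      exact ⟨Sum.inr 2, by simp⟩
  · rintro (p | p) (q | q) <;>
      first
      | (fin_cases p <;> fin_cases q <;>
          simp [Equiv.ofBijective, starK13, hua, hub, hud, hua.symm, hub.symm, hud.symm,
            hab, had, hbd, show ¬ G.Adj b a from fun h => hab h.symm,
            show ¬ G.Adj d a from fun h => had h.symm,
            show ¬ G.Adj d b from fun h => hbd h.symm, G.irrefl])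


/-- An isomorphic component has supp of the corresponding cardinality. -/
lemma comp_iso_ncard {G : SimpleGraph (Fin n)} {K : G.ConnectedComponent}
    {W : Type*} [Fintype W] {H : SimpleGraph W} (h : ComponentIso G K H) :
    K.supp.ncard = Fintype.card W := by
  obtain ⟨f⟩ := h
  rw [← Nat.card_coe_set_eq, Nat.card_congr f.toEquiv, Nat.card_eq_fintype_card]

lemma ncard_pair {u v : Fin n} (h : u ≠ v) : ({u, v} : Set (Fin n)).ncard = 2 := by
  rw [Set.ncard_insert_of_notMem (by simpa using h), Set.ncard_singleton]

lemma ncard_three {x y z : Fin n} (h1 : x ≠ y) (h2 : x ≠ z) (h3 : y ≠ z) :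
    ({x, y, z} : Set (Fin n)).ncard = 3 := by
  rw [Set.ncard_insert_of_notMem (by simp [h1, h2]),
    Set.ncard_insert_of_notMem (by simpa using h3), Set.ncard_singleton]

lemma ncard_four {w x y z : Fin n} (h1 : w ≠ x) (h2 : w ≠ y) (h3 : w ≠ z)
    (h4 : x ≠ y) (h5 : x ≠ z) (h6 : y ≠ z) :
    ({w, x, y, z} : Set (Fin n)).ncard = 4 := by
  rw [Set.ncard_insert_of_notMem (by simp [h1, h2, h3]),
    Set.ncard_insert_of_notMem (by simp [h4, h5]),
    Set.ncard_insert_of_notMem (by simpa using h6), Set.ncard_singleton]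

lemma shape4_not_starK13 {G : SimpleGraph (Fin n)} {K : G.ConnectedComponent}
    (h : IsShape4 G K) : ¬ ComponentIso G K starK13 := by
  obtain ⟨w, x, y, z, hwx', hwy', hwz', hxy', hxz', hyz', hwx, hxy, hyz, hwy, hwz, hxz,
    hsupp⟩ := h
  rintro ⟨f⟩
  have hadj : ∀ j : Fin 3, (G.induce K.supp).Adj (f.symm (Sum.inl 0)) (f.symm (Sum.inr j)) := by
    intro j
    exact f.symm.map_rel_iff.2 (by simp [starK13])
  have hne : ∀ j k : Fin 3, j ≠ k →
      ((f.symm (Sum.inr j) : ↥K.supp) : Fin n) ≠ ((f.symm (Sum.inr k) : ↥K.supp) : Fin n) := by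
    intro j k hjk hc
    exact hjk (by simpa using f.symm.toEquiv.injective (Subtype.ext hc))
  obtain ⟨p, hpv⟩ : ∃ t, ((f.symm (Sum.inl 0) : ↥K.supp) : Fin n) = t := ⟨_, rfl⟩
  obtain ⟨q0, hq0v⟩ : ∃ t, ((f.symm (Sum.inr 0) : ↥K.supp) : Fin n) = t := ⟨_, rfl⟩
  obtain ⟨q1, hq1v⟩ : ∃ t, ((f.symm (Sum.inr 1) : ↥K.supp) : Fin n) = t := ⟨_, rfl⟩
  obtain ⟨q2, hq2v⟩ : ∃ t, ((f.symm (Sum.inr 2) : ↥K.supp) : Fin n) = t := ⟨_, rfl⟩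
  have hpmem : p ∈ ({w, x, y, z} : Set (Fin n)) := by
    rw [← hsupp, ← hpv]; exact (f.symm (Sum.inl 0)).2
  have hq0 : q0 ∈ ({w, x, y, z} : Set (Fin n)) := by
    rw [← hsupp, ← hq0v]; exact (f.symm (Sum.inr 0)).2
  have hq1 : q1 ∈ ({w, x, y, z} : Set (Fin n)) := by
    rw [← hsupp, ← hq1v]; exact (f.symm (Sum.inr 1)).2
  have hq2 : q2 ∈ ({w, x, y, z} : Set (Fin n)) := by
    rw [← hsupp, ← hq2v]; exact (f.symm (Sum.inr 2)).2
  have ha0 : G.Adj p q0 := by rw [← hpv, ← hq0v]; exact comap_adj.1 (hadj 0)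
  have ha1 : G.Adj p q1 := by rw [← hpv, ← hq1v]; exact comap_adj.1 (hadj 1)
  have ha2 : G.Adj p q2 := by rw [← hpv, ← hq2v]; exact comap_adj.1 (hadj 2)
  have h01 : q0 ≠ q1 := by rw [← hq0v, ← hq1v]; exact hne 0 1 (by decide)
  have h02 : q0 ≠ q2 := by rw [← hq0v, ← hq2v]; exact hne 0 2 (by decide)
  have h12 : q1 ≠ q2 := by rw [← hq1v, ← hq2v]; exact hne 1 2 (by decide)
  have hsym1 : ¬ G.Adj y w := fun h => hwy h.symm
  have hsym2 : ¬ G.Adj z w := fun h => hwz h.symm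
  have hsym3 : ¬ G.Adj z x := fun h => hxz h.symm
  have hloop : ∀ t : Fin n, ¬ G.Adj t t := fun t => G.irrefl
  simp only [Set.mem_insert_iff, Set.mem_singleton_iff] at hpmem hq0 hq1 hq2
  rcases hpmem with rfl | rfl | rfl | rfl <;>
    rcases hq0 with rfl | rfl | rfl | rfl <;>
      rcases hq1 with rfl | rfl | rfl | rfl <;>
        first
          | exact (hloop _) ha0
          | exact (hloop _) ha1
          | exact hwy ha0
          | exact hwy ha1
          | exact hwz ha0
          | exact hwz ha1
          | exact hxz ha0
          | exact hxz ha1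
          | exact hsym1 ha0
          | exact hsym1 ha1
          | exact hsym2 ha0
          | exact hsym2 ha1
          | exact hsym3 ha0
          | exact hsym3 ha1
          | exact h01 rfl
          | (rcases hq2 with rfl | rfl | rfl | rfl <;>
              first
                | exact (hloop _) ha2
                | exact hwy ha2
                | exact hwz ha2
                | exact hxz ha2
                | exact hsym1 ha2
                | exact hsym2 ha2
                | exact hsym3 ha2
                | exact h02 rfl
                | exact h12 rfl)

lemma shapeS_not_path4 {G : SimpleGraph (Fin n)} {K : G.ConnectedComponent}
    (h : IsShapeS G K) : ¬ ComponentIso G K (pathGraph 4) := by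
  obtain ⟨u, a, b, d, hua', hub', hud', hab', had', hbd', hua, hub, hud, hab, had, hbd,
    hsupp⟩ := h
  rintro ⟨f⟩
  have hmem : ∀ t (ht : t ∈ ({u,a,b,d} : Set (Fin n))), (⟨t, hsupp ▸ ht⟩ : ↥K.supp) ∈ Set.univ :=
    fun _ _ => trivial
  have key : ∀ (p q r s : Fin 4), (pathGraph 4).Adj p q → (pathGraph 4).Adj p r →
      (pathGraph 4).Adj p s → q = r ∨ q = s ∨ r = s := by
    simp only [pathGraph_adj]
    omega
  have hu' : u ∈ K.supp := by rw [hsupp]; simp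
  have ha' : a ∈ K.supp := by rw [hsupp]; simp
  have hb' : b ∈ K.supp := by rw [hsupp]; simp
  have hd' : d ∈ K.supp := by rw [hsupp]; simp
  have adjA : (pathGraph 4).Adj (f ⟨u, hu'⟩) (f ⟨a, ha'⟩) :=
    f.map_rel_iff.2 (comap_adj.2 hua)
  have adjB : (pathGraph 4).Adj (f ⟨u, hu'⟩) (f ⟨b, hb'⟩) :=
    f.map_rel_iff.2 (comap_adj.2 hub)
  have adjD : (pathGraph 4).Adj (f ⟨u, hu'⟩) (f ⟨d, hd'⟩) :=
    f.map_rel_iff.2 (comap_adj.2 hud)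
  rcases key _ _ _ _ adjA adjB adjD with hh | hh | hh
  · exact hab' (by simpa using f.toEquiv.injective hh)
  · exact had' (by simpa using f.toEquiv.injective hh)
  · exact hbd' (by simpa using f.toEquiv.injective hh)


def phi (c : Sym2 (Fin n) → Fin m) :
    Sym2 (Fin n) → Σ i : Fin m, (colorClass c i).ConnectedComponent :=
  Sym2.lift ⟨fun x y => ⟨c s(x, y), (colorClass c (c s(x, y))).connectedComponentMk x⟩, by
    intro x y
    by_cases hxy : x = y
    · subst hxy; rfl
    · have hswap : s(y, x) = s(x, y) := Sym2.eq_swap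
      dsimp only
      rw [hswap]
      exact congrArg _ (ConnectedComponent.sound
        (SimpleGraph.Adj.reachable (G := colorClass c (c s(x,y))) ⟨fun h => hxy h.symm, by rw [hswap]⟩)).symm⟩

variable {c : Sym2 (Fin n) → Fin m}

lemma phi_eq {a b : Fin n} (hab : a ≠ b) {i : Fin m}
    {K : (colorClass c i).ConnectedComponent} :
    phi c s(a, b) = ⟨i, K⟩ ↔ (colorClass c i).Adj a b ∧ a ∈ K.supp := by
  have hlift : phi c s(a, b)
      = ⟨c s(a, b), (colorClass c (c s(a, b))).connectedComponentMk a⟩ := rfl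
  constructor
  · intro h
    rw [hlift] at h
    obtain ⟨h1, h2⟩ := Sigma.mk.inj_iff.mp h
    subst h1
    exact ⟨⟨hab, rfl⟩, eq_of_heq h2⟩
  · rintro ⟨⟨-, hcol⟩, hmem⟩
    rw [hlift]
    subst hcol
    exact congrArg _ hmem


variable [DecidableEq (Σ i : Fin m, (colorClass c i).ConnectedComponent)]

lemma mem_supp_right {i : Fin m} {K : (colorClass c i).ConnectedComponent} {a b : Fin n}
    (hadj : (colorClass c i).Adj a b) (ha : a ∈ K.supp) : b ∈ K.supp := by
  rw [ConnectedComponent.mem_supp_iff] at ha ⊢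
  exact (ConnectedComponent.sound hadj.symm.reachable).trans ha

lemma fib_card0 {i : Fin m} {K : (colorClass c i).ConnectedComponent}
    (h : ¬ CompHasEdge (colorClass c i) K) :
    (univ.filter fun e : Sym2 (Fin n) => ¬ e.IsDiag ∧ phi c e = ⟨i, K⟩).card = 0 := by
  rw [Finset.card_eq_zero]
  refine Finset.eq_empty_of_forall_notMem fun e => ?_
  induction e using Sym2.ind with
  | _ a b =>
    simp only [mem_filter, mem_univ, true_and, Sym2.mk_isDiag_iff, not_and]
    intro hdiag hphi
    rw [phi_eq hdiag] at hphi
    exact h ⟨a, b, hphi.2, hphi.1⟩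

lemma fib_card2 {i : Fin m} {K : (colorClass c i).ConnectedComponent}
    (h : IsShape2 (colorClass c i) K) :
    (univ.filter fun e : Sym2 (Fin n) => ¬ e.IsDiag ∧ phi c e = ⟨i, K⟩).card = 1 := by
  obtain ⟨u, v, huv, hadj, hsupp⟩ := h
  have : (univ.filter fun e : Sym2 (Fin n) => ¬ e.IsDiag ∧ phi c e = ⟨i, K⟩)
      = {s(u, v)} := by
    ext e
    induction e using Sym2.ind with
    | _ a b =>
      simp only [mem_filter, mem_univ, true_and, mem_singleton, Sym2.mk_isDiag_iff]
      constructor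
      · rintro ⟨hdiag, hphi⟩
        rw [phi_eq hdiag] at hphi
        obtain ⟨hadj', hmem⟩ := hphi
        have hbmem := mem_supp_right hadj' hmem
        rw [hsupp] at hmem hbmem
        simp only [Set.mem_insert_iff, Set.mem_singleton_iff] at hmem hbmem
        rcases hmem with rfl | rfl <;> rcases hbmem with rfl | rfl <;>
          first
            | exact absurd rfl hdiag
            | rfl
            | exact Sym2.eq_swap
      · intro heq
        rw [Sym2.eq_iff] at heq
        have hu : u ∈ K.supp := by rw [hsupp]; simp
        have hv : v ∈ K.supp := by rw [hsupp]; simp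
        rcases heq with ⟨rfl, rfl⟩ | ⟨rfl, rfl⟩
        · exact ⟨huv, (phi_eq huv).2 ⟨hadj, hu⟩⟩
        · exact ⟨huv.symm, (phi_eq huv.symm).2 ⟨hadj.symm, hv⟩⟩
  rw [this, card_singleton]

lemma fib_card3 {i : Fin m} {K : (colorClass c i).ConnectedComponent}
    (h : IsShape3 (colorClass c i) K) :
    (univ.filter fun e : Sym2 (Fin n) => ¬ e.IsDiag ∧ phi c e = ⟨i, K⟩).card = 2 := by
  obtain ⟨x, y, z, hxy', hxz', hyz', hxy, hyz, hxz, hsupp⟩ := h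
  have hsym : ¬ (colorClass c i).Adj z x := fun h => hxz h.symm
  have : (univ.filter fun e : Sym2 (Fin n) => ¬ e.IsDiag ∧ phi c e = ⟨i, K⟩)
      = {s(x, y), s(y, z)} := by
    ext e
    induction e using Sym2.ind with
    | _ a b =>
      simp only [mem_filter, mem_univ, true_and, mem_insert, mem_singleton,
        Sym2.mk_isDiag_iff]
      constructor
      · rintro ⟨hdiag, hphi⟩
        rw [phi_eq hdiag] at hphi
        obtain ⟨hadj', hmem⟩ := hphi
        have hbmem := mem_supp_right hadj' hmem
        rw [hsupp] at hmem hbmem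
        simp only [Set.mem_insert_iff, Set.mem_singleton_iff] at hmem hbmem
        rcases hmem with rfl | rfl | rfl <;> rcases hbmem with rfl | rfl | rfl <;>
          first
            | exact absurd rfl hdiag
            | exact absurd hadj' hxz
            | exact absurd hadj' hsym
            | exact Or.inl rfl
            | exact Or.inl Sym2.eq_swap
            | exact Or.inr rfl
            | exact Or.inr Sym2.eq_swap
      · intro heq
        have hx : x ∈ K.supp := by rw [hsupp]; simp
        have hy : y ∈ K.supp := by rw [hsupp]; simp
        have hz : z ∈ K.supp := by rw [hsupp]; simp
        rcases heq with heq | heq <;> rw [Sym2.eq_iff] at heq <;>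
          rcases heq with ⟨rfl, rfl⟩ | ⟨rfl, rfl⟩
        · exact ⟨hxy', (phi_eq hxy').2 ⟨hxy, hx⟩⟩
        · exact ⟨hxy'.symm, (phi_eq hxy'.symm).2 ⟨hxy.symm, hy⟩⟩
        · exact ⟨hyz', (phi_eq hyz').2 ⟨hyz, hy⟩⟩
        · exact ⟨hyz'.symm, (phi_eq hyz'.symm).2 ⟨hyz.symm, hz⟩⟩
  rw [this]
  rw [card_insert_of_notMem (by simp [Sym2.eq_iff]; tauto), card_singleton]

lemma fib_card4 {i : Fin m} {K : (colorClass c i).ConnectedComponent}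
    (h : IsShape4 (colorClass c i) K) :
    (univ.filter fun e : Sym2 (Fin n) => ¬ e.IsDiag ∧ phi c e = ⟨i, K⟩).card = 3 := by
  obtain ⟨w, x, y, z, hwx', hwy', hwz', hxy', hxz', hyz', hwx, hxy, hyz, hwy, hwz, hxz,
    hsupp⟩ := h
  have hsym1 : ¬ (colorClass c i).Adj y w := fun h => hwy h.symm
  have hsym2 : ¬ (colorClass c i).Adj z w := fun h => hwz h.symm
  have hsym3 : ¬ (colorClass c i).Adj z x := fun h => hxz h.symm
  have : (univ.filter fun e : Sym2 (Fin n) => ¬ e.IsDiag ∧ phi c e = ⟨i, K⟩)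
      = {s(w, x), s(x, y), s(y, z)} := by
    ext e
    induction e using Sym2.ind with
    | _ a b =>
      simp only [mem_filter, mem_univ, true_and, mem_insert, mem_singleton,
        Sym2.mk_isDiag_iff]
      constructor
      · rintro ⟨hdiag, hphi⟩
        rw [phi_eq hdiag] at hphi
        obtain ⟨hadj', hmem⟩ := hphi
        have hbmem := mem_supp_right hadj' hmem
        rw [hsupp] at hmem hbmem
        simp only [Set.mem_insert_iff, Set.mem_singleton_iff] at hmem hbmem
        rcases hmem with rfl | rfl | rfl | rfl <;> rcases hbmem with rfl | rfl | rfl | rfl <;>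
          first
            | exact absurd rfl hdiag
            | exact absurd hadj' hwy
            | exact absurd hadj' hwz
            | exact absurd hadj' hxz
            | exact absurd hadj' hsym1
            | exact absurd hadj' hsym2
            | exact absurd hadj' hsym3
            | exact Or.inl rfl
            | exact Or.inl Sym2.eq_swap
            | exact Or.inr (Or.inl rfl)
            | exact Or.inr (Or.inl Sym2.eq_swap)
            | exact Or.inr (Or.inr rfl)
            | exact Or.inr (Or.inr Sym2.eq_swap)
      · intro heq
        have hw : w ∈ K.supp := by rw [hsupp]; simp
        have hx : x ∈ K.supp := by rw [hsupp]; simp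
        have hy : y ∈ K.supp := by rw [hsupp]; simp
        have hz : z ∈ K.supp := by rw [hsupp]; simp
        rcases heq with heq | heq | heq <;> rw [Sym2.eq_iff] at heq <;>
          rcases heq with ⟨rfl, rfl⟩ | ⟨rfl, rfl⟩
        · exact ⟨hwx', (phi_eq hwx').2 ⟨hwx, hw⟩⟩
        · exact ⟨hwx'.symm, (phi_eq hwx'.symm).2 ⟨hwx.symm, hx⟩⟩
        · exact ⟨hxy', (phi_eq hxy').2 ⟨hxy, hx⟩⟩
        · exact ⟨hxy'.symm, (phi_eq hxy'.symm).2 ⟨hxy.symm, hy⟩⟩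
        · exact ⟨hyz', (phi_eq hyz').2 ⟨hyz, hy⟩⟩
        · exact ⟨hyz'.symm, (phi_eq hyz'.symm).2 ⟨hyz.symm, hz⟩⟩
  rw [this]
  rw [card_insert_of_notMem (by simp [Sym2.eq_iff]; tauto),
    card_insert_of_notMem (by simp [Sym2.eq_iff]; tauto), card_singleton]

lemma fib_cardS {i : Fin m} {K : (colorClass c i).ConnectedComponent}
    (h : IsShapeS (colorClass c i) K) :
    (univ.filter fun e : Sym2 (Fin n) => ¬ e.IsDiag ∧ phi c e = ⟨i, K⟩).card = 3 := by
  obtain ⟨u, a, b, d, hua', hub', hud', hab', had', hbd', hua, hub, hud, hab, had, hbd,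
    hsupp⟩ := h
  have hsym1 : ¬ (colorClass c i).Adj b a := fun h => hab h.symm
  have hsym2 : ¬ (colorClass c i).Adj d a := fun h => had h.symm
  have hsym3 : ¬ (colorClass c i).Adj d b := fun h => hbd h.symm
  have : (univ.filter fun e : Sym2 (Fin n) => ¬ e.IsDiag ∧ phi c e = ⟨i, K⟩)
      = {s(u, a), s(u, b), s(u, d)} := by
    ext e
    induction e using Sym2.ind with
    | _ p q =>
      simp only [mem_filter, mem_univ, true_and, mem_insert, mem_singleton,
        Sym2.mk_isDiag_iff]
      constructor
      · rintro ⟨hdiag, hphi⟩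
        rw [phi_eq hdiag] at hphi
        obtain ⟨hadj', hmem⟩ := hphi
        have hbmem := mem_supp_right hadj' hmem
        rw [hsupp] at hmem hbmem
        simp only [Set.mem_insert_iff, Set.mem_singleton_iff] at hmem hbmem
        rcases hmem with rfl | rfl | rfl | rfl <;> rcases hbmem with rfl | rfl | rfl | rfl <;>
          first
            | exact absurd rfl hdiag
            | exact absurd hadj' hab
            | exact absurd hadj' had
            | exact absurd hadj' hbd
            | exact absurd hadj' hsym1
            | exact absurd hadj' hsym2
            | exact absurd hadj' hsym3
            | exact Or.inl rfl
            | exact Or.inl Sym2.eq_swap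
            | exact Or.inr (Or.inl rfl)
            | exact Or.inr (Or.inl Sym2.eq_swap)
            | exact Or.inr (Or.inr rfl)
            | exact Or.inr (Or.inr Sym2.eq_swap)
      · intro heq
        have hu : u ∈ K.supp := by rw [hsupp]; simp
        have ha : a ∈ K.supp := by rw [hsupp]; simp
        have hb : b ∈ K.supp := by rw [hsupp]; simp
        have hd : d ∈ K.supp := by rw [hsupp]; simp
        rcases heq with heq | heq | heq <;> rw [Sym2.eq_iff] at heq <;>
          rcases heq with ⟨rfl, rfl⟩ | ⟨rfl, rfl⟩
        · exact ⟨hua', (phi_eq hua').2 ⟨hua, hu⟩⟩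
        · exact ⟨hua'.symm, (phi_eq hua'.symm).2 ⟨hua.symm, ha⟩⟩
        · exact ⟨hub', (phi_eq hub').2 ⟨hub, hu⟩⟩
        · exact ⟨hub'.symm, (phi_eq hub'.symm).2 ⟨hub.symm, hb⟩⟩
        · exact ⟨hud', (phi_eq hud').2 ⟨hud, hu⟩⟩
        · exact ⟨hud'.symm, (phi_eq hud'.symm).2 ⟨hud.symm, hd⟩⟩
  rw [this]
  rw [card_insert_of_notMem (by simp [Sym2.eq_iff]; tauto),
    card_insert_of_notMem (by simp [Sym2.eq_iff]; tauto), card_singleton]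


lemma compHasEdge_of_iso {G : SimpleGraph (Fin n)} {K : G.ConnectedComponent}
    {W : Type*} {H : SimpleGraph W} (hiso : ComponentIso G K H)
    (hH : ∃ a b : W, H.Adj a b) : CompHasEdge G K := by
  obtain ⟨f⟩ := hiso
  obtain ⟨a, b, hab⟩ := hH
  have : (G.induce K.supp).Adj (f.symm a) (f.symm b) := f.symm.map_rel_iff.2 hab
  exact ⟨(f.symm a).1, (f.symm b).1, (f.symm a).2, comap_adj.1 this⟩

end ECA
end EdgeCountAux

/-- For a `(5,8)`-coloring of `K_n` (`n ≥ 5`) with `m` colors and no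
monochromatic triangle, `binom(n,2) = |A| + 2|B| + 3|C| + 3|D|`, where `B = B₁ ∪ B₂`. -/
theorem edge_count_identity {n m : ℕ} (hn : 5 ≤ n)
    (c : Sym2 (Fin n) → Fin m) (hc : IsPQColoring 5 8 c)
    (htri : ¬ HasMonoTriangle c) :
    n.choose 2 = (setA c).ncard + 2 * ((setB1 c).ncard + (setB2 c).ncard) +
      3 * (setC c).ncard + 3 * (setD c).ncard := by
  classical
  letI : Fintype (Σ i : Fin m, (colorClass c i).ConnectedComponent) := Fintype.ofFinite _
  -- B₁ and B₂ partition B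
  have hB : (setB1 c).ncard + (setB2 c).ncard = (setB c).ncard := by
    have hsub : setB1 c ⊆ setB c := fun X hX => hX.1
    have hdiff := Set.ncard_diff_add_ncard_of_subset hsub (Set.toFinite _)
    have hB2 : setB2 c = setB c \ setB1 c := rfl
    rw [hB2]
    omega
  -- the fiberwise count
  have hcard : (Finset.univ.filter fun e : Sym2 (Fin n) => ¬ e.IsDiag).card = n.choose 2 := by
    rw [← Fintype.card_subtype, Sym2.card_subtype_not_diag, Fintype.card_fin]
  have hsum := Finset.card_eq_sum_card_fiberwise
    (f := ECA.phi c) (s := Finset.univ.filter fun e : Sym2 (Fin n) => ¬ e.IsDiag)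
    (t := Finset.univ) (fun e _ => Finset.mem_univ _)
  have hpt : ∀ X : (Σ i : Fin m, (colorClass c i).ConnectedComponent),
      ((Finset.univ.filter fun e : Sym2 (Fin n) => ¬ e.IsDiag).filter
          fun e => ECA.phi c e = X).card
        = (if X ∈ setA c then 1 else 0) + (if X ∈ setB c then 2 else 0)
          + (if X ∈ setC c then 3 else 0) + (if X ∈ setD c then 3 else 0) := by
    rintro ⟨i, K⟩
    rw [Finset.filter_filter]
    by_cases hE : CompHasEdge (colorClass c i) K
    · rcases ECA.classify hn hc htri i K hE with h | h | h | h
      · -- K₂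
        have hiso : ComponentIso (colorClass c i) K (pathGraph 2) := by
          obtain ⟨u, v, huv, hadj, hsupp⟩ := h
          show Nonempty _
          rw [hsupp]
          exact ECA.iso2 huv hadj
        have hnc : K.supp.ncard = 2 := by
          obtain ⟨u, v, huv, hadj, hsupp⟩ := h
          rw [hsupp]; exact ECA.ncard_pair huv
        have hA : (⟨i, K⟩ : Σ i : Fin m, (colorClass c i).ConnectedComponent) ∈ setA c := hiso
        have hBn : (⟨i, K⟩ : Σ i : Fin m, (colorClass c i).ConnectedComponent) ∉ setB c := by
          intro hB'
          have := ECA.comp_iso_ncard (hB' : ComponentIso (colorClass c i) K (pathGraph 3))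
          rw [hnc] at this
          simpa using this
        have hCn : (⟨i, K⟩ : Σ i : Fin m, (colorClass c i).ConnectedComponent) ∉ setC c := by
          intro hC'
          have := ECA.comp_iso_ncard (hC' : ComponentIso (colorClass c i) K (pathGraph 4))
          rw [hnc] at this
          simpa using this
        have hDn : (⟨i, K⟩ : Σ i : Fin m, (colorClass c i).ConnectedComponent) ∉ setD c := by
          intro hD'
          have := ECA.comp_iso_ncard (hD' : ComponentIso (colorClass c i) K starK13)
          rw [hnc] at this
          simpa using this
        rw [if_pos hA, if_neg hBn, if_neg hCn, if_neg hDn, ECA.fib_card2 h]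
      · -- P₃
        have hiso : ComponentIso (colorClass c i) K (pathGraph 3) := by
          obtain ⟨x, y, z, h1, h2, h3, h4, h5, h6, hsupp⟩ := h
          show Nonempty _
          rw [hsupp]
          exact ECA.iso3 h1 h2 h3 h4 h5 h6
        have hnc : K.supp.ncard = 3 := by
          obtain ⟨x, y, z, h1, h2, h3, h4, h5, h6, hsupp⟩ := h
          rw [hsupp]; exact ECA.ncard_three h1 h2 h3
        have hBmem : (⟨i, K⟩ : Σ i : Fin m, (colorClass c i).ConnectedComponent) ∈ setB c := hiso
        have hAn : (⟨i, K⟩ : Σ i : Fin m, (colorClass c i).ConnectedComponent) ∉ setA c := by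
          intro h'
          have := ECA.comp_iso_ncard (h' : ComponentIso (colorClass c i) K (pathGraph 2))
          rw [hnc] at this
          simpa using this
        have hCn : (⟨i, K⟩ : Σ i : Fin m, (colorClass c i).ConnectedComponent) ∉ setC c := by
          intro h'
          have := ECA.comp_iso_ncard (h' : ComponentIso (colorClass c i) K (pathGraph 4))
          rw [hnc] at this
          simpa using this
        have hDn : (⟨i, K⟩ : Σ i : Fin m, (colorClass c i).ConnectedComponent) ∉ setD c := by
          intro h'
          have := ECA.comp_iso_ncard (h' : ComponentIso (colorClass c i) K starK13)
          rw [hnc] at this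
          simpa using this
        rw [if_neg hAn, if_pos hBmem, if_neg hCn, if_neg hDn, ECA.fib_card3 h]
      · -- P₄
        have hiso : ComponentIso (colorClass c i) K (pathGraph 4) := by
          obtain ⟨w, x, y, z, h1, h2, h3, h4, h5, h6, h7, h8, h9, h10, h11, h12, hsupp⟩ := h
          show Nonempty _
          rw [hsupp]
          exact ECA.iso4 h1 h2 h3 h4 h5 h6 h7 h8 h9 h10 h11 h12
        have hnc : K.supp.ncard = 4 := by
          obtain ⟨w, x, y, z, h1, h2, h3, h4, h5, h6, h7, h8, h9, h10, h11, h12, hsupp⟩ := h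
          rw [hsupp]; exact ECA.ncard_four h1 h2 h3 h4 h5 h6
        have hCmem : (⟨i, K⟩ : Σ i : Fin m, (colorClass c i).ConnectedComponent) ∈ setC c := hiso
        have hAn : (⟨i, K⟩ : Σ i : Fin m, (colorClass c i).ConnectedComponent) ∉ setA c := by
          intro h'
          have := ECA.comp_iso_ncard (h' : ComponentIso (colorClass c i) K (pathGraph 2))
          rw [hnc] at this
          simpa using this
        have hBn : (⟨i, K⟩ : Σ i : Fin m, (colorClass c i).ConnectedComponent) ∉ setB c := by
          intro h'
          have := ECA.comp_iso_ncard (h' : ComponentIso (colorClass c i) K (pathGraph 3))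
          rw [hnc] at this
          simpa using this
        have hDn : (⟨i, K⟩ : Σ i : Fin m, (colorClass c i).ConnectedComponent) ∉ setD c :=
          fun h' => ECA.shape4_not_starK13 h h'
        rw [if_neg hAn, if_neg hBn, if_pos hCmem, if_neg hDn, ECA.fib_card4 h]
      · -- K₁,₃
        have hiso : ComponentIso (colorClass c i) K starK13 := by
          obtain ⟨u, a, b, d, h1, h2, h3, h4, h5, h6, h7, h8, h9, h10, h11, h12, hsupp⟩ := h
          show Nonempty _
          rw [hsupp]
          exact ECA.isoS h1 h2 h3 h4 h5 h6 h7 h8 h9 h10 h11 h12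
        have hnc : K.supp.ncard = 4 := by
          obtain ⟨u, a, b, d, h1, h2, h3, h4, h5, h6, h7, h8, h9, h10, h11, h12, hsupp⟩ := h
          rw [hsupp]; exact ECA.ncard_four h1 h2 h3 h4 h5 h6
        have hDmem : (⟨i, K⟩ : Σ i : Fin m, (colorClass c i).ConnectedComponent) ∈ setD c := hiso
        have hAn : (⟨i, K⟩ : Σ i : Fin m, (colorClass c i).ConnectedComponent) ∉ setA c := by
          intro h'
          have := ECA.comp_iso_ncard (h' : ComponentIso (colorClass c i) K (pathGraph 2))
          rw [hnc] at this
          simpa using this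
        have hBn : (⟨i, K⟩ : Σ i : Fin m, (colorClass c i).ConnectedComponent) ∉ setB c := by
          intro h'
          have := ECA.comp_iso_ncard (h' : ComponentIso (colorClass c i) K (pathGraph 3))
          rw [hnc] at this
          simpa using this
        have hCn : (⟨i, K⟩ : Σ i : Fin m, (colorClass c i).ConnectedComponent) ∉ setC c :=
          fun h' => ECA.shapeS_not_path4 h h'
        rw [if_neg hAn, if_neg hBn, if_neg hCn, if_pos hDmem, ECA.fib_cardS h]
    · -- no edge: all zero
      have hAn : (⟨i, K⟩ : Σ i : Fin m, (colorClass c i).ConnectedComponent) ∉ setA c :=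
        fun h' => hE (ECA.compHasEdge_of_iso h' ⟨0, 1, by rw [pathGraph_adj]; left; rfl⟩)
      have hBn : (⟨i, K⟩ : Σ i : Fin m, (colorClass c i).ConnectedComponent) ∉ setB c :=
        fun h' => hE (ECA.compHasEdge_of_iso h' ⟨0, 1, by rw [pathGraph_adj]; left; rfl⟩)
      have hCn : (⟨i, K⟩ : Σ i : Fin m, (colorClass c i).ConnectedComponent) ∉ setC c :=
        fun h' => hE (ECA.compHasEdge_of_iso h' ⟨0, 1, by rw [pathGraph_adj]; left; rfl⟩)
      have hDn : (⟨i, K⟩ : Σ i : Fin m, (colorClass c i).ConnectedComponent) ∉ setD c :=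
        fun h' => hE (ECA.compHasEdge_of_iso h' ⟨Sum.inl 0, Sum.inr 0, by simp [starK13]⟩)
      rw [if_neg hAn, if_neg hBn, if_neg hCn, if_neg hDn, ECA.fib_card0 hE]
  -- assemble
  have hconst : ∀ (p : (Σ i : Fin m, (colorClass c i).ConnectedComponent) → Prop)
      [DecidablePred p] (k : ℕ),
      (∑ X ∈ Finset.univ, if p X then k else 0)
        = k * (Finset.univ.filter p).card := by
    intro p _ k
    rw [Finset.sum_ite, Finset.sum_const, Finset.sum_const_zero, add_zero, smul_eq_mul, mul_comm]
  have hset : ∀ s : Set (Σ i : Fin m, (colorClass c i).ConnectedComponent),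
      (Finset.univ.filter (· ∈ s)).card = s.ncard := by
    intro s
    rw [Set.filter_mem_univ_eq_toFinset, ← Set.ncard_eq_toFinset_card']
  rw [hcard] at hsum
  rw [hsum]
  have : ∑ X ∈ Finset.univ,
      ((Finset.univ.filter fun e : Sym2 (Fin n) => ¬ e.IsDiag).filter
        fun e => ECA.phi c e = X).card
      = (setA c).ncard + 2 * (setB c).ncard + 3 * (setC c).ncard + 3 * (setD c).ncard := by
    calc ∑ X ∈ Finset.univ,
        ((Finset.univ.filter fun e : Sym2 (Fin n) => ¬ e.IsDiag).filter
          fun e => ECA.phi c e = X).card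
        = ∑ X ∈ Finset.univ, ((if X ∈ setA c then 1 else 0) + (if X ∈ setB c then 2 else 0)
            + (if X ∈ setC c then 3 else 0) + (if X ∈ setD c then 3 else 0)) :=
          Finset.sum_congr rfl fun X _ => hpt X
      _ = (setA c).ncard + 2 * (setB c).ncard + 3 * (setC c).ncard + 3 * (setD c).ncard := by
          rw [Finset.sum_add_distrib, Finset.sum_add_distrib, Finset.sum_add_distrib,
            hconst, hconst, hconst, hconst, hset, hset, hset, hset]
          ring
    
  rw [this, hB]
end
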